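/- arXiv:1112.5485 — 2 statements merged into one kernel-verified Lean document; each statement's English description precedes it below -/
import Mathlib

section
/- Let w ∈ L_n. If α ∈ F_n(w) and β ∈ B_n^+, then αβ ∈ F_n(w); that is, F_n(w) is closed under right multiplication, so α ∈ F_n(w) implies α·B_n^+ ⊆ F_n(w). -/
/-!
Common setup: the positive braid monoid `B_n^+` on `n` strands, presented by the
Artin generators `σ_1, …, σ_{n-1}` (1-based indexing) with the braid relations;
lex-representatives, forbidden prefixes, admissible functions, etc.
-/

namespace BraidPaper

/-- Words in the Artin generators: the free monoid on `n - 1` letters. -/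
abbrev Word (n : ℕ) := FreeMonoid (Fin (n - 1))

/-- The generator `σ_i` (`1 ≤ i ≤ n - 1`, 1-based) as a one-letter word;
the empty word for out-of-range indices. -/
def sigma (n : ℕ) (i : ℕ) : Word n :=
  if h : 1 ≤ i ∧ i ≤ n - 1 then FreeMonoid.of (⟨i - 1, by omega⟩ : Fin (n - 1)) else 1

/-- The braid relations. -/
inductive BraidRel (n : ℕ) : Word n → Word n → Prop
  | comm : ∀ i j : ℕ, 1 ≤ i → i ≤ n - 1 → 1 ≤ j → j ≤ n - 1 → (i + 2 ≤ j ∨ j + 2 ≤ i) →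
      BraidRel n (sigma n i * sigma n j) (sigma n j * sigma n i)
  | braid : ∀ i : ℕ, 1 ≤ i → i + 1 ≤ n - 1 →
      BraidRel n (sigma n i * sigma n (i + 1) * sigma n i)
        (sigma n (i + 1) * sigma n i * sigma n (i + 1))

/-- The congruence generated by the braid relations. -/
def braidCon (n : ℕ) : Con (Word n) := conGen (BraidRel n)

/-- The positive braid monoid `B_n^+`. -/
abbrev PB (n : ℕ) := (braidCon n).Quotient

/-- The canonical projection `b : A_n^* → B_n^+`. -/
def pr (n : ℕ) : Word n →* PB n := (braidCon n).mk'

/-- The length homomorphism on words (with values in `Multiplicative ℕ`). -/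
def lenHom (n : ℕ) : Word n →* Multiplicative ℕ :=
  FreeMonoid.lift fun _ => Multiplicative.ofAdd 1

lemma lenHom_sigma (n t : ℕ) (h1 : 1 ≤ t) (h2 : t ≤ n - 1) :
    lenHom n (sigma n t) = Multiplicative.ofAdd 1 := by
  rw [sigma, dif_pos ⟨h1, h2⟩]
  exact FreeMonoid.lift_eval_of _ _

lemma braidCon_le_ker (n : ℕ) : braidCon n ≤ Con.ker (lenHom n) := by
  refine Con.conGen_le.mpr ?_
  intro x y h
  rw [Con.ker_rel]
  cases h with
  | comm i j hi hi' hj hj' hij =>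
      rw [map_mul, map_mul, mul_comm]
  | braid i hi hi' =>
      rw [map_mul, map_mul, map_mul, map_mul,
        lenHom_sigma n i hi (by omega), lenHom_sigma n (i + 1) (by omega) hi']

/-- The (well-defined) length of a positive braid. -/
def len (n : ℕ) (x : PB n) : ℕ :=
  Multiplicative.toAdd (Con.lift _ (lenHom n) (braidCon_le_ker n) x)

/-- The length of a word. -/
def wlen {n : ℕ} (w : Word n) : ℕ := (FreeMonoid.toList w).length

/-- Strict lexicographic order on words, induced by `σ_1 < σ_2 < ⋯ < σ_{n-1}`. -/
def lexLt {n : ℕ} (u v : Word n) : Prop :=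
  List.Lex (· < ·) (FreeMonoid.toList u) (FreeMonoid.toList v)

/-- `L_n`: the set of lex-representatives, i.e. words that are `≤_lex`-minimal among
all words representing the same element of `B_n^+` (all of which have equal length). -/
def Ln (n : ℕ) : Set (Word n) :=
  {w | ∀ v : Word n, pr n v = pr n w → ¬ lexLt v w}

open Classical in
/-- `ω(β)`: the lex-representative of a positive braid `β`. -/
noncomputable def omegaRep (n : ℕ) (β : PB n) : Word n :=
  if h : ∃ w : Word n, pr n w = β ∧ w ∈ Ln n then h.choose else 1

/-- `F_n(w)`: the set of forbidden prefixes after `w`. -/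
def Fset (n : ℕ) (w : Word n) : Set (PB n) :=
  {α | w * omegaRep n α ∉ Ln n}

/-- Left-divisibility `a ≼ b` in `B_n^+`. -/
def ldvd (n : ℕ) (a b : PB n) : Prop := ∃ c : PB n, a * c = b

/-- The set of `≼`-minimal elements of a subset of `B_n^+`. -/
def minimals (n : ℕ) (S : Set (PB n)) : Set (PB n) :=
  {a | a ∈ S ∧ ∀ b ∈ S, ldvd n b a → b = a}

/-- `F_n^min(w)`: the set of minimal forbidden prefixes after `w`. -/
def Fmin (n : ℕ) (w : Word n) : Set (PB n) := minimals n (Fset n w)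

/-- `d` is a least common right-multiple of the set `S`. -/
def IsLcm (n : ℕ) (S : Set (PB n)) (d : PB n) : Prop :=
  (∀ a ∈ S, ldvd n a d) ∧ ∀ e : PB n, (∀ a ∈ S, ldvd n a e) → ldvd n d e

/-- The descending product `σ_a σ_{a-1} ⋯ σ_b` (empty if `b > a`). -/
def prodDesc (n a b : ℕ) : Word n :=
  (((List.range' b (a + 1 - b)).reverse).map (sigma n)).prod

/-- The ascending product `σ_a σ_{a+1} ⋯ σ_b` (empty if `a > b`). -/
def prodAsc (n a b : ℕ) : Word n :=
  ((List.range' a (b + 1 - a)).map (sigma n)).prod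

/-- Admissible functions `f : {1,…,n-1} → {-1,0,1,…,n-1}`. -/
def Admissible (n : ℕ) (f : ℕ → ℤ) : Prop :=
  (∀ i : ℕ, 1 ≤ i → i ≤ n - 1 → -1 ≤ f i ∧ f i ≤ (i : ℤ)) ∧ f 1 ≠ -1

/-- The set `F_f ⊆ B_n^+` associated to an admissible function `f`: the elements
`σ_i σ_{i-1} ⋯ σ_{f(i)}` for `i` with `1 ≤ f(i) ≤ i`, together with the elements
`σ_{i-1} σ_i` for `i` with `f(i) = -1`. -/
def Ff (n : ℕ) (f : ℕ → ℤ) : Set (PB n) :=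
  {x | ∃ i : ℕ, 1 ≤ i ∧ i ≤ n - 1 ∧ 1 ≤ f i ∧ f i ≤ (i : ℤ) ∧
        x = pr n (prodDesc n i (f i).toNat)} ∪
  {x | ∃ i : ℕ, 1 ≤ i ∧ i ≤ n - 1 ∧ f i = -1 ∧ x = pr n (sigma n (i - 1) * sigma n i)}

/-- `F_n^min(w, m)`: the set of `≼`-minimal elements of `{σ_1,…,σ_m} ∪ F_n^min(w)`. -/
def FminM (n : ℕ) (w : Word n) (m : ℕ) : Set (PB n) :=
  minimals n ({x | ∃ i : ℕ, 1 ≤ i ∧ i ≤ m ∧ x = pr n (sigma n i)} ∪ Fmin n w)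

/-- `x_{n,j}` (for `j : ℤ`): the number of elements of `B_n^+` of length `j`
(`0` for negative `j`). -/
noncomputable def xcount (n : ℕ) (j : ℤ) : ℕ :=
  Nat.card {x : PB n // (len n x : ℤ) = j}

/-- `x_{n,k}(w,m)`: the number of words in `L_n` of length `k` of the form `w·w'`,
where `w'` does not begin with any of `σ_1, …, σ_m`. -/
noncomputable def xwm (n k : ℕ) (w : Word n) (m : ℕ) : ℕ :=
  Nat.card {v : Word n // wlen v = k ∧ v ∈ Ln n ∧
    ∃ w' : Word n, v = w * w' ∧
      ∀ i : ℕ, 1 ≤ i → i ≤ m → ¬ ∃ u : Word n, w' = sigma n i * u}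

section Infra

variable {n : ℕ}

/-- `lenHom` computes length. -/
lemma lenHom_eq_length (u : Word n) :
    lenHom n u = Multiplicative.ofAdd (FreeMonoid.toList u).length := by
  induction u using FreeMonoid.recOn with
  | one => rfl
  | of_mul x xs ih =>
      rw [map_mul, ih, lenHom, FreeMonoid.lift_eval_of]
      rw [FreeMonoid.toList_of_mul, List.length_cons, ← ofAdd_add]
      congr 1
      omega

lemma con_length {u v : Word n} (h : braidCon n u v) :
    (FreeMonoid.toList u).length = (FreeMonoid.toList v).length := by
  have := Con.le_def.mp (braidCon_le_ker n) h
  rw [Con.ker_rel, lenHom_eq_length, lenHom_eq_length] at this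
  exact Multiplicative.ofAdd.injective this

lemma pr_eq_iff {u v : Word n} : pr n u = pr n v ↔ braidCon n u v := Con.eq _

/-- Decomposition of a lexicographic inequality. -/
lemma lex_dec {X : Type*} [LT X] {u v : List X} (h : List.Lex (· < ·) u v) :
    (∃ t, t ≠ [] ∧ v = u ++ t) ∨
      ∃ p x y s t, u = p ++ x :: s ∧ v = p ++ y :: t ∧ x < y := by
  induction h with
  | nil => exact Or.inl ⟨_, by simp, rfl⟩
  | @cons a l₁ l₂ h ih =>
      rcases ih with ⟨t, ht, rfl⟩ | ⟨p, x, y, s, t, h1, h2, h3⟩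
      · exact Or.inl ⟨t, ht, rfl⟩
      · exact Or.inr ⟨a :: p, x, y, s, t, by rw [h1]; rfl, by rw [h2]; rfl, h3⟩
  | @rel a₁ l₁ a₂ l₂ h => exact Or.inr ⟨[], a₁, a₂, l₁, l₂, rfl, rfl, h⟩

lemma lex_mid {X : Type*} [LT X] (p : List X) {x y : X} (s t : List X) (h : x < y) :
    List.Lex (· < ·) (p ++ x :: s) (p ++ y :: t) :=
  List.Lex.append_left _ (List.Lex.rel h) p

/-- Key extension lemma: if `u <lex w ++ a` of equal length and `w` is not a prefix
of `u`, then `u ++ b <lex w ++ c` for arbitrary `b, c`. -/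
lemma lex_ext {X : Type*} [LinearOrder X] {u w a : List X}
    (h : List.Lex (· < ·) u (w ++ a)) (hlen : u.length = w.length + a.length)
    (hnp : ¬ w <+: u) (b c : List X) : List.Lex (· < ·) (u ++ b) (w ++ c) := by
  rcases lex_dec h with ⟨t, ht, hv⟩ | ⟨p, x, y, s, t, h1, h2, h3⟩
  · exfalso
    have h' := congrArg List.length hv
    rw [List.length_append, List.length_append] at h'
    have : t = [] := List.length_eq_zero_iff.mp (by omega)
    exact ht this
  · by_cases hpw : w.length ≤ p.length
    · exfalso
      apply hnp
      have hpu : p <+: u := h1 ▸ ⟨x :: s, rfl⟩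
      have hwwa : w <+: w ++ a := ⟨a, rfl⟩
      have hpwa : p <+: w ++ a := h2 ▸ ⟨y :: t, rfl⟩
      exact (List.prefix_of_prefix_length_le hwwa hpwa hpw).trans hpu
    · push_neg at hpw
      have hp : p <+: w := by
        have hwwa : w <+: w ++ a := ⟨a, rfl⟩
        have hpwa : p <+: w ++ a := h2 ▸ ⟨y :: t, rfl⟩
        exact List.prefix_of_prefix_length_le hpwa hwwa (by omega)
      obtain ⟨d, hd⟩ := hp
      rcases d with _ | ⟨z, d'⟩
      · exfalso; rw [← hd] at hpw; simp at hpw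
      · rw [← hd, List.append_assoc] at h2
        have h2' := List.append_cancel_left h2
        rw [List.cons_append] at h2'
        have hzy : z = y := (List.cons.injEq _ _ _ _ ▸ h2').1
        subst hzy
        rw [h1, ← hd, List.append_assoc, List.cons_append, List.append_assoc,
          List.cons_append]
        exact lex_mid p _ _ h3

/-- Every braid has a representative in `L_n`. -/
lemma lnExists (β : PB n) : ∃ w : Word n, pr n w = β ∧ w ∈ Ln n := by
  obtain ⟨u₀, hu₀⟩ := Con.mk'_surjective (c := braidCon n) β
  have hS : (FreeMonoid.toList u₀) ∈ {l : List (Fin (n - 1)) | pr n (FreeMonoid.ofList l) = β} := by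
    show pr n (FreeMonoid.ofList (FreeMonoid.toList u₀)) = β
    rw [FreeMonoid.ofList_toList]; exact hu₀
  have hfin : {l : List (Fin (n - 1)) | pr n (FreeMonoid.ofList l) = β}.Finite := by
    apply (List.finite_length_eq (Fin (n - 1)) (FreeMonoid.toList u₀).length).subset
    intro l hl
    have : pr n (FreeMonoid.ofList l) = pr n u₀ := by rw [hl]; exact hu₀.symm
    have := con_length (pr_eq_iff.mp this)
    simpa using this
  obtain ⟨m, hm, hmin⟩ := Set.exists_min_image _ id hfin ⟨_, hS⟩
  refine ⟨FreeMonoid.ofList m, hm, ?_⟩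
  intro v hv hlex
  have hvS : FreeMonoid.toList v ∈ {l : List (Fin (n - 1)) | pr n (FreeMonoid.ofList l) = β} := by
    simpa [FreeMonoid.ofList_toList] using hv.trans hm
  have hle := hmin _ hvS
  simp only [id] at hle
  exact absurd (show FreeMonoid.toList v < m from hlex) (not_lt.mpr hle)

lemma omega_spec (β : PB n) : pr n (omegaRep n β) = β ∧ omegaRep n β ∈ Ln n := by
  rw [omegaRep, dif_pos (lnExists β)]
  exact (lnExists β).choose_spec

lemma pr_omega (β : PB n) : pr n (omegaRep n β) = β := (omega_spec β).1

lemma omega_mem_ln (β : PB n) : omegaRep n β ∈ Ln n := (omega_spec β).2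

lemma ln_unique {u v : Word n} (hu : u ∈ Ln n) (hv : v ∈ Ln n) (h : pr n u = pr n v) :
    u = v := by
  rcases lt_trichotomy (FreeMonoid.toList u) (FreeMonoid.toList v) with h' | h' | h'
  · exact absurd (show lexLt u v from h') (hv u h)
  · exact h'
  · exact absurd (show lexLt v u from h') (hu v h.symm)

lemma eq_omega_of_mem_ln {u : Word n} (hu : u ∈ Ln n) : u = omegaRep n (pr n u) :=
  ln_unique hu (omega_mem_ln _) (pr_omega (pr n u)).symm

lemma ln_of_mul_left {u v : Word n} (h : u * v ∈ Ln n) : u ∈ Ln n := by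
  intro u' hpr hlex
  have hpr' : pr n (u' * v) = pr n (u * v) := by rw [map_mul, map_mul, hpr]
  apply h (u' * v) hpr'
  have hlen : (FreeMonoid.toList u').length = (FreeMonoid.toList u).length :=
    con_length (pr_eq_iff.mp hpr)
  rcases lex_dec hlex with ⟨t, ht, hv⟩ | ⟨p, x, y, s, t, h1, h2, h3⟩
  · exfalso
    have h' := congrArg List.length hv
    rw [List.length_append] at h'
    exact ht (List.length_eq_zero_iff.mp (by omega))
  · show List.Lex _ (FreeMonoid.toList u' ++ FreeMonoid.toList v)
      (FreeMonoid.toList u ++ FreeMonoid.toList v)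
    rw [h1, h2, List.append_assoc, List.append_assoc, List.cons_append, List.cons_append]
    exact lex_mid p _ _ h3

lemma ln_of_mul_right {u v : Word n} (h : u * v ∈ Ln n) : v ∈ Ln n := by
  intro v' hpr hlex
  have hpr' : pr n (u * v') = pr n (u * v) := by rw [map_mul, map_mul, hpr]
  apply h (u * v') hpr'
  exact List.Lex.append_left _ hlex _

end Infra

section Cancel

variable {n : ℕ}

/-- Congruence of letter lists. -/
def CL (n : ℕ) (u v : List (Fin (n - 1))) : Prop :=
  braidCon n (FreeMonoid.ofList u) (FreeMonoid.ofList v)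

lemma CL.refl (u : List (Fin (n - 1))) : CL n u u := (braidCon n).refl _

lemma CL.symm {u v : List (Fin (n - 1))} (h : CL n u v) : CL n v u := (braidCon n).symm h

lemma CL.trans {u v w : List (Fin (n - 1))} (h : CL n u v) (h' : CL n v w) : CL n u w :=
  (braidCon n).trans h h'

lemma CL.append {u v u' v' : List (Fin (n - 1))} (h : CL n u v) (h' : CL n u' v') :
    CL n (u ++ u') (v ++ v') := by
  have := (braidCon n).mul h h'
  rwa [← FreeMonoid.ofList_append, ← FreeMonoid.ofList_append] at this

lemma CL.length {u v : List (Fin (n - 1))} (h : CL n u v) : u.length = v.length := by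
  have := con_length (n := n) (u := FreeMonoid.ofList u) (v := FreeMonoid.ofList v) h
  simpa using this

lemma CL.cons (c : Fin (n - 1)) {u v : List (Fin (n - 1))} (h : CL n u v) :
    CL n (c :: u) (c :: v) := by
  have := (CL.refl (n := n) [c]).append h
  simpa using this

/-- Far-apart generators (0-based). -/
def Far {n : ℕ} (a b : Fin (n - 1)) : Prop := a.val + 2 ≤ b.val ∨ b.val + 2 ≤ a.val

/-- Adjacent generators (0-based). -/
def Adj {n : ℕ} (a b : Fin (n - 1)) : Prop := a.val + 1 = b.val ∨ b.val + 1 = a.val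

instance {a b : Fin (n - 1)} : Decidable (Far a b) := by unfold Far; infer_instance

lemma far_symm {a b : Fin (n - 1)} (h : Far a b) : Far b a := h.symm

lemma adj_symm {a b : Fin (n - 1)} (h : Adj a b) : Adj b a := h.symm

lemma far_ne {a b : Fin (n - 1)} (h : Far a b) : a ≠ b := by
  intro he; subst he; rcases h with h | h <;> omega

lemma adj_ne {a b : Fin (n - 1)} (h : Adj a b) : a ≠ b := by
  intro he; subst he; rcases h with h | h <;> omega

lemma adj_not_far {a b : Fin (n - 1)} (h : Adj a b) : ¬ Far a b := by
  intro hf; rcases h with h | h <;> rcases hf with hf | hf <;> omega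

lemma letter_cases (a b : Fin (n - 1)) : a = b ∨ Far a b ∨ Adj a b := by
  by_cases h : a.val = b.val
  · exact Or.inl (Fin.ext h)
  · right; unfold Far Adj; omega

lemma sigma_of (a : Fin (n - 1)) : sigma n (a.val + 1) = FreeMonoid.of a := by
  have ha := a.isLt
  rw [sigma, dif_pos ⟨by omega, by omega⟩]
  exact congrArg FreeMonoid.of (Fin.ext (by simp))

lemma swap_rel {a b : Fin (n - 1)} (h : Far a b) : CL n [a, b] [b, a] := by
  have ha := a.isLt; have hb := b.isLt
  have hc := BraidRel.comm (n := n) (a.val + 1) (b.val + 1) (by omega) (by omega)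
    (by omega) (by omega) (by rcases h with h | h <;> [left; right] <;> omega)
  rw [sigma_of, sigma_of] at hc
  exact ConGen.Rel.of _ _ hc

lemma braid_rel {a b : Fin (n - 1)} (h : a.val + 1 = b.val) : CL n [a, b, a] [b, a, b] := by
  have ha := a.isLt; have hb := b.isLt
  have hc := BraidRel.braid (n := n) (a.val + 1) (by omega) (by omega)
  rw [show a.val + 1 + 1 = b.val + 1 by omega] at hc
  rw [sigma_of, sigma_of] at hc
  exact ConGen.Rel.of _ _ hc

lemma CL.context (p t : List (Fin (n - 1))) {u v : List (Fin (n - 1))} (h : CL n u v) :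
    CL n (p ++ u ++ t) (p ++ v ++ t) :=
  ((CL.refl p).append h).append (CL.refl t)

lemma CL.swap (p t : List (Fin (n - 1))) {a b : Fin (n - 1)} (h : Far a b) :
    CL n (p ++ a :: b :: t) (p ++ b :: a :: t) := by
  have := (swap_rel (n := n) h).context p t
  simpa [List.append_assoc] using this

lemma CL.braid3 (p t : List (Fin (n - 1))) {a b : Fin (n - 1)} (h : Adj a b) :
    CL n (p ++ a :: b :: a :: t) (p ++ b :: a :: b :: t) := by
  rcases h with h | h
  · have := (braid_rel (n := n) h).context p t
    simpa [List.append_assoc] using this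
  · have := ((braid_rel (n := n) h).symm).context p t
    simpa [List.append_assoc] using this

end Cancel

section Chains

variable {n : ℕ}

/-- Letter-level braid relations (0-based). -/
inductive LRel (n : ℕ) : List (Fin (n - 1)) → List (Fin (n - 1)) → Prop
  | comm {a b : Fin (n - 1)} (h : Far a b) : LRel n [a, b] [b, a]
  | braid {a b : Fin (n - 1)} (h : a.val + 1 = b.val) : LRel n [a, b, a] [b, a, b]

/-- One rewriting step. -/
def Stp (n : ℕ) (u v : List (Fin (n - 1))) : Prop :=
  ∃ p l r t, (LRel n l r ∨ LRel n r l) ∧ u = p ++ l ++ t ∧ v = p ++ r ++ t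

/-- Chains of rewriting steps with length. -/
inductive StepN (n : ℕ) : ℕ → List (Fin (n - 1)) → List (Fin (n - 1)) → Prop
  | zero (u) : StepN n 0 u u
  | succ {N u v w} (h : Stp n u v) (h' : StepN n N v w) : StepN n (N + 1) u w

lemma LRel.cl {l r : List (Fin (n - 1))} (h : LRel n l r) : CL n l r := by
  cases h with
  | comm h => exact swap_rel h
  | braid h => exact braid_rel h

lemma Stp.cl {u v : List (Fin (n - 1))} (h : Stp n u v) : CL n u v := by
  obtain ⟨p, l, r, t, hrel, rfl, rfl⟩ := h
  rcases hrel with h | h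
  · exact h.cl.context p t
  · exact h.cl.symm.context p t

lemma Stp.symm {u v : List (Fin (n - 1))} (h : Stp n u v) : Stp n v u := by
  obtain ⟨p, l, r, t, hrel, rfl, rfl⟩ := h
  exact ⟨p, r, l, t, hrel.symm, rfl, rfl⟩

lemma StepN.cl {N : ℕ} {u v : List (Fin (n - 1))} (h : StepN n N u v) : CL n u v := by
  induction h with
  | zero u => exact CL.refl u
  | succ h _ ih => exact h.cl.trans ih

lemma StepN.snoc {N : ℕ} {u v w : List (Fin (n - 1))} (h : StepN n N u v) (h' : Stp n v w) :
    StepN n (N + 1) u w := by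
  induction h with
  | zero u => exact .succ h' (.zero w)
  | succ h₀ _ ih => exact .succ h₀ (ih h')

lemma StepN.symm {N : ℕ} {u v : List (Fin (n - 1))} (h : StepN n N u v) : StepN n N v u := by
  induction h with
  | zero u => exact .zero u
  | succ h₀ _ ih => exact ih.snoc h₀.symm

lemma StepN.trans {N M : ℕ} {u v w : List (Fin (n - 1))} (h : StepN n N u v)
    (h' : StepN n M v w) : StepN n (N + M) u w := by
  induction h with
  | zero u => simpa using h'
  | succ h₀ _ ih =>
      rw [Nat.add_right_comm]
      exact .succ h₀ (ih h')

lemma Stp.append_right {u v : List (Fin (n - 1))} (w : List (Fin (n - 1))) (h : Stp n u v) :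
    Stp n (u ++ w) (v ++ w) := by
  obtain ⟨p, l, r, t, hrel, rfl, rfl⟩ := h
  exact ⟨p, l, r, t ++ w, hrel, by simp, by simp⟩

lemma Stp.append_left {u v : List (Fin (n - 1))} (w : List (Fin (n - 1))) (h : Stp n u v) :
    Stp n (w ++ u) (w ++ v) := by
  obtain ⟨p, l, r, t, hrel, rfl, rfl⟩ := h
  exact ⟨w ++ p, l, r, t, hrel, by simp, by simp⟩

lemma StepN.append_right {N : ℕ} {u v : List (Fin (n - 1))} (w : List (Fin (n - 1)))
    (h : StepN n N u v) : StepN n N (u ++ w) (v ++ w) := by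
  induction h with
  | zero u => exact .zero _
  | succ h₀ _ ih => exact .succ (h₀.append_right w) ih

lemma StepN.append_left {N : ℕ} {u v : List (Fin (n - 1))} (w : List (Fin (n - 1)))
    (h : StepN n N u v) : StepN n N (w ++ u) (w ++ v) := by
  induction h with
  | zero u => exact .zero _
  | succ h₀ _ ih => exact .succ (h₀.append_left w) ih

lemma braidRel_lrel {x y : Word n} (h : BraidRel n x y) :
    LRel n (FreeMonoid.toList x) (FreeMonoid.toList y) := by
  cases h with
  | comm i j hi hi' hj hj' hij =>
      rw [sigma, dif_pos ⟨hi, hi'⟩, sigma, dif_pos ⟨hj, hj'⟩]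
      exact LRel.comm (by rcases hij with h | h <;> [left; right] <;> simp <;> omega)
  | braid i hi hi' =>
      rw [sigma, dif_pos ⟨hi, by omega⟩, sigma, dif_pos ⟨by omega, hi'⟩]
      exact LRel.braid (by simp; omega)

lemma con_to_stepN {x y : Word n} (h : braidCon n x y) :
    ∃ N, StepN n N (FreeMonoid.toList x) (FreeMonoid.toList y) := by
  induction h with
  | of x y h =>
      exact ⟨1, .succ ⟨[], _, _, [], Or.inl (braidRel_lrel h), by simp, by simp⟩ (.zero _)⟩
  | refl x => exact ⟨0, .zero _⟩
  | symm _ ih => obtain ⟨N, hN⟩ := ih; exact ⟨N, hN.symm⟩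
  | trans _ _ ih₁ ih₂ =>
      obtain ⟨N₁, h₁⟩ := ih₁; obtain ⟨N₂, h₂⟩ := ih₂
      exact ⟨N₁ + N₂, h₁.trans h₂⟩
  | mul _ _ ih₁ ih₂ =>
      obtain ⟨N₁, h₁⟩ := ih₁; obtain ⟨N₂, h₂⟩ := ih₂
      exact ⟨N₁ + N₂, (h₁.append_right _).trans (h₂.append_left _)⟩

lemma cl_to_stepN {u v : List (Fin (n - 1))} (h : CL n u v) : ∃ N, StepN n N u v :=
  con_to_stepN h

end Chains

section Key

variable {n : ℕ}

/-- The complement word: `σ_a · compW a b` is the right lcm of `σ_a, σ_b` (for `a ≠ b`). -/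
def compW {n : ℕ} (a b : Fin (n - 1)) : List (Fin (n - 1)) :=
  if Far a b then [b] else [b, a]

lemma compW_far {a b : Fin (n - 1)} (h : Far a b) : compW a b = [b] := if_pos h

lemma compW_adj {a b : Fin (n - 1)} (h : Adj a b) : compW a b = [b, a] :=
  if_neg (adj_not_far h)

/-- The conclusion of Garside's key lemma. -/
def KeyS (n : ℕ) (a b : Fin (n - 1)) (u v : List (Fin (n - 1))) : Prop :=
  (a = b → CL n u v) ∧
    (a ≠ b → ∃ z, CL n u (compW a b ++ z) ∧ CL n v (compW b a ++ z))

lemma keyS_of_eq {a b : Fin (n - 1)} {u v : List (Fin (n - 1))} (heq : a = b)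
    (h : CL n u v) : KeyS n a b u v := ⟨fun _ => h, fun hne => absurd heq hne⟩

lemma keyS_of_ne {a b : Fin (n - 1)} {u v : List (Fin (n - 1))} (hne : a ≠ b)
    (z : List (Fin (n - 1))) (h1 : CL n u (compW a b ++ z)) (h2 : CL n v (compW b a ++ z)) :
    KeyS n a b u v := ⟨fun heq => absurd heq hne, fun _ => ⟨z, h1, h2⟩⟩

/-- The case of a commutation step at the head. -/
lemma leafB1 {M : ℕ}
    (KEY : ∀ (a' b' : Fin (n - 1)) (u' v' : List (Fin (n - 1))),
      CL n (a' :: u') (b' :: v') → u'.length + 1 < M → KeyS n a' b' u' v')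
    {a k b : Fin (n - 1)} {t v : List (Fin (n - 1))} (hfar : Far a k)
    (hlen : t.length + 1 < M) (K : KeyS n k b (a :: t) v) : KeyS n a b (k :: t) v := by
  rcases letter_cases k b with rfl | hkb | hkb
  · -- k = b
    refine keyS_of_ne (far_ne hfar) t ?_ ?_
    · rw [compW_far hfar]; exact CL.refl _
    · rw [compW_far (far_symm hfar)]; exact (K.1 rfl).symm
  · -- Far k b
    obtain ⟨z₁, hz1, hz2⟩ := K.2 (far_ne hkb)
    rw [compW_far hkb] at hz1
    rw [compW_far (far_symm hkb)] at hz2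
    rcases letter_cases a b with rfl | hab | hab
    · -- a = b
      have h1 := (KEY a a t z₁ hz1 hlen).1 rfl
      exact keyS_of_eq rfl ((CL.cons k h1).trans hz2.symm)
    · -- Far a b
      obtain ⟨z₂, h1, h2⟩ := (KEY a b t z₁ hz1 hlen).2 (far_ne hab)
      rw [compW_far hab] at h1
      rw [compW_far (far_symm hab)] at h2
      refine keyS_of_ne (far_ne hab) (k :: z₂) ?_ ?_
      · rw [compW_far hab]
        exact (CL.cons k h1).trans (CL.swap [] z₂ hkb)
      · rw [compW_far (far_symm hab)]
        exact hz2.trans ((CL.cons k h2).trans (CL.swap [] z₂ (far_symm hfar)))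
    · -- Adj a b
      obtain ⟨z₂, h1, h2⟩ := (KEY a b t z₁ hz1 hlen).2 (adj_ne hab)
      rw [compW_adj hab] at h1
      rw [compW_adj (adj_symm hab)] at h2
      refine keyS_of_ne (adj_ne hab) (k :: z₂) ?_ ?_
      · rw [compW_adj hab]
        exact (CL.cons k h1).trans
          ((CL.swap [] (a :: z₂) hkb).trans (CL.swap [b] z₂ (far_symm hfar)))
      · rw [compW_adj (adj_symm hab)]
        exact hz2.trans ((CL.cons k h2).trans
          ((CL.swap [] (b :: z₂) (far_symm hfar)).trans (CL.swap [a] z₂ hkb)))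
  · -- Adj k b
    obtain ⟨z₁, hz1, hz2⟩ := K.2 (adj_ne hkb)
    rw [compW_adj hkb] at hz1
    rw [compW_adj (adj_symm hkb)] at hz2
    -- hz1 : CL (a::t) (b::k::z₁), hz2 : CL v (k::b::z₁)
    have hab : a ≠ b := by
      rcases hfar with h | h <;> rcases hkb with h' | h' <;>
        exact Fin.ne_of_val_ne (by omega)
    obtain ⟨z₂, h1, h2⟩ := (KEY a b t (k :: z₁) hz1 hlen).2 hab
    have hlz1 : z₁.length + 2 = t.length + 1 := by
      have := hz1.length; simp at this; omega
    rcases letter_cases a b with rfl | hab' | hab'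
    · exact absurd rfl hab
    · -- Far a b
      rw [compW_far hab'] at h1
      rw [compW_far (far_symm hab')] at h2
      -- h1 : CL t (b::z₂), h2 : CL (k::z₁) (a::z₂)
      obtain ⟨z₃, h3, h4⟩ := (KEY k a z₁ z₂ h2 (by omega)).2 (far_ne (far_symm hfar))
      rw [compW_far (far_symm hfar)] at h3
      rw [compW_far hfar] at h4
      -- h3 : CL z₁ (a::z₃), h4 : CL z₂ (k::z₃)
      refine keyS_of_ne hab (k :: b :: z₃) ?_ ?_
      · rw [compW_far hab']
        exact (CL.cons k h1).trans
          ((CL.cons k (CL.cons b h4)).trans (CL.braid3 [] z₃ hkb))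
      · rw [compW_far (far_symm hab')]
        exact hz2.trans ((CL.cons k (CL.cons b h3)).trans
          ((CL.swap [k] z₃ (far_symm hab')).trans (CL.swap [] (b :: z₃) (far_symm hfar))))
    · -- Adj a b
      rw [compW_adj hab'] at h1
      rw [compW_adj (adj_symm hab')] at h2
      -- h1 : CL t (b::a::z₂), h2 : CL (k::z₁) (a::b::z₂)
      obtain ⟨z₃, h3, h4⟩ := (KEY k a z₁ (b :: z₂) h2 (by omega)).2 (far_ne (far_symm hfar))
      rw [compW_far (far_symm hfar)] at h3
      rw [compW_far hfar] at h4
      -- h3 : CL z₁ (a::z₃), h4 : CL (b::z₂) (k::z₃)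
      have hlz2 : z₂.length + 2 = t.length := by
        have := h1.length; simp at this; omega
      obtain ⟨z₄, h5, h6⟩ :=
        (KEY b k z₂ z₃ h4 (by omega)).2 (fun he => adj_ne hkb he.symm)
      rw [compW_adj (adj_symm hkb)] at h5
      rw [compW_adj hkb] at h6
      -- h5 : CL z₂ (k::b::z₄), h6 : CL z₃ (b::k::z₄)
      refine keyS_of_ne hab (k :: b :: a :: z₄) ?_ ?_
      · rw [compW_adj hab']
        -- k::t → k::b::a::z₂ → k::b::a::k::b::z₄ → ... → b::a::k::b::a::z₄
        exact (CL.cons k h1).trans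
          ((CL.cons k (CL.cons b (CL.cons a h5))).trans
          ((CL.swap [k,b] (b :: z₄) hfar).trans
          ((CL.braid3 [] (a :: b :: z₄) hkb).trans
          ((CL.braid3 [b,k] z₄ (adj_symm hab')).trans
          (CL.swap [b] (b :: a :: z₄) (far_symm hfar))))))
      · rw [compW_adj (adj_symm hab')]
        -- v → k::b::z₁ → k::b::a::z₃ → k::b::a::b::k::z₄ → ... → a::b::k::b::a::z₄
        exact hz2.trans ((CL.cons k (CL.cons b h3)).trans
          ((CL.cons k (CL.cons b (CL.cons a h6))).trans
          ((CL.braid3 [k] (k :: z₄) (adj_symm hab')).trans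
          ((CL.swap [] (b :: a :: k :: z₄) (far_symm hfar)).trans
          ((CL.swap [a,k,b] z₄ hfar).trans
          (CL.braid3 [a] (a :: z₄) hkb))))))

end Key

section KeyBF

variable {n : ℕ}

/-- The case of a braid step at the head. -/
lemma leafBF {M : ℕ}
    (KEY : ∀ (a' b' : Fin (n - 1)) (u' v' : List (Fin (n - 1))),
      CL n (a' :: u') (b' :: v') → u'.length + 1 < M → KeyS n a' b' u' v')
    {a i' b : Fin (n - 1)} {t v : List (Fin (n - 1))} (hadj : Adj a i')
    (hlen : t.length + 2 < M) (K : KeyS n i' b (a :: i' :: t) v) :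
    KeyS n a b (i' :: a :: t) v := by
  rcases letter_cases i' b with rfl | hib | hib
  · -- i' = b
    refine keyS_of_ne (adj_ne hadj) t ?_ ?_
    · rw [compW_adj hadj]; exact CL.refl _
    · rw [compW_adj (adj_symm hadj)]; exact (K.1 rfl).symm
  · -- Far i' b
    obtain ⟨z₁, hz1, hz2⟩ := K.2 (far_ne hib)
    rw [compW_far hib] at hz1
    rw [compW_far (far_symm hib)] at hz2
    -- hz1 : CL (a::i'::t) (b::z₁), hz2 : CL v (i'::z₁)
    have hab : a ≠ b := by
      rcases hadj with h | h <;> rcases hib with h' | h' <;>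
        exact Fin.ne_of_val_ne (by omega)
    obtain ⟨z₂, h1, h2⟩ := (KEY a b (i' :: t) z₁ hz1 (by simp; omega)).2 hab
    rcases letter_cases a b with rfl | hab' | hab'
    · exact absurd rfl hab
    · -- Far a b
      rw [compW_far hab'] at h1
      rw [compW_far (far_symm hab')] at h2
      -- h1 : CL (i'::t) (b::z₂), h2 : CL z₁ (a::z₂)
      obtain ⟨z₃, h3, h4⟩ := (KEY i' b t z₂ h1 (by omega)).2 (far_ne hib)
      rw [compW_far hib] at h3
      rw [compW_far (far_symm hib)] at h4
      -- h3 : CL t (b::z₃), h4 : CL z₂ (i'::z₃)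
      refine keyS_of_ne hab (i' :: a :: z₃) ?_ ?_
      · rw [compW_far hab']
        exact (CL.cons i' (CL.cons a h3)).trans
          ((CL.swap [i'] z₃ hab').trans (CL.swap [] (a :: z₃) hib))
      · rw [compW_far (far_symm hab')]
        exact hz2.trans ((CL.cons i' h2).trans
          ((CL.cons i' (CL.cons a h4)).trans (CL.braid3 [] z₃ (adj_symm hadj))))
    · -- Adj a b
      rw [compW_adj hab'] at h1
      rw [compW_adj (adj_symm hab')] at h2
      -- h1 : CL (i'::t) (b::a::z₂), h2 : CL z₁ (a::b::z₂)
      have hlz2 : z₂.length + 2 = t.length + 1 := by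
        have := h1.length; simp at this; omega
      obtain ⟨z₃, h3, h4⟩ := (KEY i' b t (a :: z₂) h1 (by omega)).2 (far_ne hib)
      rw [compW_far hib] at h3
      rw [compW_far (far_symm hib)] at h4
      -- h3 : CL t (b::z₃), h4 : CL (a::z₂) (i'::z₃)
      obtain ⟨z₄, h5, h6⟩ := (KEY a i' z₂ z₃ h4 (by omega)).2 (adj_ne hadj)
      rw [compW_adj hadj] at h5
      rw [compW_adj (adj_symm hadj)] at h6
      -- h5 : CL z₂ (i'::a::z₄), h6 : CL z₃ (a::i'::z₄)
      refine keyS_of_ne hab (i' :: a :: b :: z₄) ?_ ?_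
      · rw [compW_adj hab']
        exact (CL.cons i' (CL.cons a h3)).trans
          ((CL.cons i' (CL.cons a (CL.cons b h6))).trans
          ((CL.braid3 [i'] (i' :: z₄) hab').trans
          ((CL.swap [] (a :: b :: i' :: z₄) hib).trans
          ((CL.swap [b,i',a] z₄ (far_symm hib)).trans
          (CL.braid3 [b] (b :: z₄) (adj_symm hadj))))))
      · rw [compW_adj (adj_symm hab')]
        exact hz2.trans ((CL.cons i' h2).trans
          ((CL.cons i' (CL.cons a (CL.cons b h5))).trans
          ((CL.swap [i',a] (a :: z₄) (far_symm hib)).trans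
          ((CL.braid3 [] (b :: a :: z₄) (adj_symm hadj)).trans
          ((CL.braid3 [a,i'] z₄ hab').trans
          (CL.swap [a] (a :: b :: z₄) hib))))))
  · -- Adj i' b
    obtain ⟨z₁, hz1, hz2⟩ := K.2 (adj_ne hib)
    rw [compW_adj hib] at hz1
    rw [compW_adj (adj_symm hib)] at hz2
    -- hz1 : CL (a::i'::t) (b::i'::z₁), hz2 : CL v (i'::b::z₁)
    have hlz1 : z₁.length = t.length := by
      have := hz1.length; simp at this; omega
    rcases eq_or_ne b a with rfl | hba
    · -- b = a
      have e1 := (KEY b b (i' :: t) (i' :: z₁) hz1 (by simp; omega)).1 rfl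
      have e2 := (KEY i' i' t z₁ e1 (by omega)).1 rfl
      exact keyS_of_eq rfl ((CL.cons i' (CL.cons b e2)).trans hz2.symm)
    · -- b ≠ a
      have hab : a ≠ b := hba.symm
      have hfab : Far a b := by
        have hvab : a.val ≠ b.val := fun h => hab (Fin.ext h)
        rcases hadj with h | h <;> rcases hib with h' | h' <;> unfold Far <;> omega
      obtain ⟨z₂, h1, h2⟩ := (KEY a b (i' :: t) (i' :: z₁) hz1 (by simp; omega)).2 hab
      rw [compW_far hfab] at h1
      rw [compW_far (far_symm hfab)] at h2
      -- h1 : CL (i'::t) (b::z₂), h2 : CL (i'::z₁) (a::z₂)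
      obtain ⟨z₃, h3, h4⟩ := (KEY i' b t z₂ h1 (by omega)).2 (adj_ne hib)
      rw [compW_adj hib] at h3
      rw [compW_adj (adj_symm hib)] at h4
      -- h3 : CL t (b::i'::z₃), h4 : CL z₂ (i'::b::z₃)
      obtain ⟨z₄, h5, h6⟩ :=
        (KEY i' a z₁ z₂ h2 (by omega)).2 (fun he => adj_ne hadj he.symm)
      rw [compW_adj (adj_symm hadj)] at h5
      rw [compW_adj hadj] at h6
      -- h5 : CL z₁ (a::i'::z₄), h6 : CL z₂ (i'::a::z₄)
      have hlz3 : z₃.length + 2 = t.length := by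
        have := h3.length; simp at this; omega
      have e1 := (KEY i' i' (b :: z₃) (a :: z₄) (h4.symm.trans h6) (by simp; omega)).1 rfl
      -- e1 : CL (b::z₃) (a::z₄)
      obtain ⟨z₅, h7, h8⟩ := (KEY b a z₃ z₄ e1 (by omega)).2 hba
      rw [compW_far (far_symm hfab)] at h7
      rw [compW_far hfab] at h8
      -- h7 : CL z₃ (a::z₅), h8 : CL z₄ (b::z₅)
      refine keyS_of_ne hab (i' :: a :: b :: i' :: z₅) ?_ ?_
      · rw [compW_far hfab]
        exact (CL.cons i' (CL.cons a h3)).trans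
          ((CL.cons i' (CL.cons a (CL.cons b (CL.cons i' h7)))).trans
          ((CL.swap [i'] (i' :: a :: z₅) hfab).trans
          ((CL.braid3 [i',b] z₅ hadj).trans
          ((CL.braid3 [] (a :: i' :: z₅) hib).trans
          (CL.swap [b,i'] (i' :: z₅) (far_symm hfab))))))
      · rw [compW_far (far_symm hfab)]
        exact hz2.trans ((CL.cons i' (CL.cons b h5)).trans
          ((CL.cons i' (CL.cons b (CL.cons a (CL.cons i' h8)))).trans
          ((CL.swap [i'] (i' :: b :: z₅) (far_symm hfab)).trans
          ((CL.braid3 [i',a] z₅ (adj_symm hib)).trans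
          (CL.braid3 [] (b :: i' :: z₅) (adj_symm hadj))))))

end KeyBF

section KeyMain

variable {n : ℕ}

theorem keyThm (M : ℕ) : ∀ (N : ℕ) (a b : Fin (n - 1)) (u v : List (Fin (n - 1))),
    StepN n N (a :: u) (b :: v) → u.length < M → KeyS n a b u v := by
  induction M using Nat.strong_induction_on with
  | _ M IHM =>
  intro N
  induction N using Nat.strong_induction_on with
  | _ N IHN =>
  intro a b u v hch hlen
  have KEY : ∀ (a' b' : Fin (n - 1)) (u' v' : List (Fin (n - 1))),
      CL n (a' :: u') (b' :: v') → u'.length + 1 < M → KeyS n a' b' u' v' := by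
    intro a' b' u' v' h hlt
    obtain ⟨N', hc⟩ := cl_to_stepN h
    exact IHM (u'.length + 1) hlt N' a' b' u' v' hc (Nat.lt_succ_self _)
  cases hch with
  | zero => exact ⟨fun _ => CL.refl _, fun hne => absurd rfl hne⟩
  | @succ N' _ mid _ hstp hch' =>
    obtain ⟨p, l, r, t, hrel, he1, he2⟩ := hstp
    subst he2
    cases p with
    | cons c p' =>
        rw [List.cons_append, List.cons_append] at he1 hch'
        injection he1 with h1 h2
        subst h1; subst h2
        have hstep_u : Stp n (p' ++ l ++ t) (p' ++ r ++ t) := ⟨p', l, r, t, hrel, rfl, rfl⟩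
        have hlen2 : (p' ++ r ++ t).length < M := by
          have := hstep_u.cl.length; omega
        have K := IHN N' (Nat.lt_succ_self N') a b (p' ++ r ++ t) v hch' hlen2
        refine ⟨fun heq => (hstep_u.cl).trans (K.1 heq), fun hne => ?_⟩
        obtain ⟨z, hh1, hh2⟩ := K.2 hne
        exact ⟨z, (hstep_u.cl).trans hh1, hh2⟩
    | nil =>
        simp only [List.nil_append] at he1 hch'
        rcases hrel with hl | hl
        · cases hl with
          | @comm x y hfar =>
              injection he1 with h1 h2
              subst h1; subst h2
              have K := IHN N' (Nat.lt_succ_self N') y b (a :: t) v hch'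
                (by simpa using hlen)
              exact leafB1 KEY hfar (by simpa using hlen) K
          | @braid x y hb =>
              injection he1 with h1 h2
              subst h1; subst h2
              have K := IHN N' (Nat.lt_succ_self N') y b (a :: y :: t) v hch'
                (by simpa using hlen)
              exact leafBF KEY (Or.inl hb) (by simpa using hlen) K
        · cases hl with
          | @comm x y hfar =>
              injection he1 with h1 h2
              subst h1; subst h2
              have K := IHN N' (Nat.lt_succ_self N') x b (a :: t) v hch'
                (by simpa using hlen)
              exact leafB1 KEY (far_symm hfar) (by simpa using hlen) K
          | @braid x y hb =>
              injection he1 with h1 h2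
              subst h1; subst h2
              have K := IHN N' (Nat.lt_succ_self N') x b (a :: x :: t) v hch'
                (by simpa using hlen)
              exact leafBF KEY (Or.inr hb) (by simpa using hlen) K

theorem keyCL {a b : Fin (n - 1)} {u v : List (Fin (n - 1))} (h : CL n (a :: u) (b :: v)) :
    KeyS n a b u v := by
  obtain ⟨N, hc⟩ := cl_to_stepN h
  exact keyThm (u.length + 1) N a b u v hc (Nat.lt_succ_self _)

lemma cl_cancel_cons {c : Fin (n - 1)} {u v : List (Fin (n - 1))}
    (h : CL n (c :: u) (c :: v)) : CL n u v := (keyCL h).1 rfl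

lemma cl_cancel {w u v : List (Fin (n - 1))} (h : CL n (w ++ u) (w ++ v)) : CL n u v := by
  induction w with
  | nil => simpa using h
  | cons c w' ih => exact ih (cl_cancel_cons (by simpa using h))

end KeyMain

section Main

variable {n : ℕ}

/-- Left cancellativity of the positive braid monoid (Garside). -/
theorem pr_cancel_left {w x y : Word n} (h : pr n (w * x) = pr n (w * y)) :
    pr n x = pr n y := by
  rw [pr_eq_iff] at h ⊢
  have h' : CL n (FreeMonoid.toList w ++ FreeMonoid.toList x)
      (FreeMonoid.toList w ++ FreeMonoid.toList y) := h
  exact cl_cancel h'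

/-- One-step chain lemma: if the lex-representative of `pr (w·δ·σ_s)` starts with `w`,
then so does the lex-representative of `pr (w·δ)`. -/
lemma step_prefix {w δ : Word n} {s : Fin (n - 1)}
    (hW : ∃ y, omegaRep n (pr n (w * δ * FreeMonoid.of s)) = w * y) :
    ∃ x, omegaRep n (pr n (w * δ)) = w * x := by
  have hZpr : pr n (omegaRep n (pr n (w * δ))) = pr n (w * δ) := pr_omega _
  have hZLn := omega_mem_ln (pr n (w * δ))
  rcases lt_trichotomy (FreeMonoid.toList (omegaRep n (pr n (w * δ))))
      (FreeMonoid.toList (w * δ)) with h' | h' | h'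
  · by_cases hp : FreeMonoid.toList w <+: FreeMonoid.toList (omegaRep n (pr n (w * δ)))
    · obtain ⟨t, ht⟩ := hp
      refine ⟨FreeMonoid.ofList t, FreeMonoid.toList.injective ?_⟩
      rw [FreeMonoid.toList_mul, FreeMonoid.toList_ofList, ht]
    · exfalso
      obtain ⟨y, hy⟩ := hW
      apply omega_mem_ln (pr n (w * δ * FreeMonoid.of s))
          (omegaRep n (pr n (w * δ)) * FreeMonoid.of s)
      · rw [pr_omega, map_mul, hZpr, ← map_mul]
      · rw [hy]
        show List.Lex _ (FreeMonoid.toList _ ++ FreeMonoid.toList (FreeMonoid.of s))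
          (FreeMonoid.toList w ++ FreeMonoid.toList y)
        apply lex_ext (a := FreeMonoid.toList δ)
        · exact h'
        · have := con_length (pr_eq_iff.mp hZpr)
          rw [FreeMonoid.toList_mul, List.length_append] at this
          exact this
        · exact hp
  · exact ⟨δ, FreeMonoid.toList.injective h'⟩
  · exact absurd (show lexLt (w * δ) (omegaRep n (pr n (w * δ))) from h')
      (hZLn (w * δ) hZpr.symm)

/-- Chain lemma. -/
lemma chain_prefix (w a : Word n) (l : List (Fin (n - 1)))
    (hW : ∃ y, omegaRep n (pr n (w * a * FreeMonoid.ofList l)) = w * y) :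
    ∃ x, omegaRep n (pr n (w * a)) = w * x := by
  induction l using List.reverseRecOn generalizing a with
  | nil => simpa using hW
  | append_singleton l s ih =>
      apply ih
      have h1 := step_prefix (w := w) (δ := a * FreeMonoid.ofList l) (s := s)
      rw [← mul_assoc] at h1
      apply h1
      have : FreeMonoid.ofList (l ++ [s]) = FreeMonoid.ofList l * FreeMonoid.of s := rfl
      rw [this, ← mul_assoc] at hW
      exact hW

end Main

/-- If `α ∈ F_n(w)` and `β ∈ B_n^+`, then `αβ ∈ F_n(w)`;
that is, `F_n(w)` is closed under right multiplication. -/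
theorem statement_0 (n : ℕ) (hn : 2 ≤ n) (w : Word n) (hw : w ∈ Ln n)
    (α β : PB n) (hα : α ∈ Fset n w) : α * β ∈ Fset n w := by
  simp only [Fset, Set.mem_setOf_eq] at hα ⊢
  intro H
  obtain ⟨x, hx⟩ : ∃ x, omegaRep n (pr n (w * omegaRep n α)) = w * x := by
    apply chain_prefix w (omegaRep n α) (FreeMonoid.toList (omegaRep n β))
    refine ⟨omegaRep n (α * β), ?_⟩
    have h1 : pr n (w * omegaRep n α * FreeMonoid.ofList (FreeMonoid.toList (omegaRep n β)))
        = pr n (w * omegaRep n (α * β)) := by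
      simp only [FreeMonoid.ofList_toList, map_mul, pr_omega, mul_assoc]
    rw [h1, ← eq_omega_of_mem_ln H]
  have hprx : pr n (w * x) = pr n (w * omegaRep n α) := by rw [← hx, pr_omega]
  have hxα : pr n x = pr n (omegaRep n α) := pr_cancel_left hprx
  have hwx : w * x ∈ Ln n := hx ▸ omega_mem_ln _
  have hxLn : x ∈ Ln n := ln_of_mul_right hwx
  have hfin : x = omegaRep n α := ln_unique hxLn (omega_mem_ln α) hxα
  exact hα (hfin ▸ hwx)

end BraidPaper
end

section
/- Let n ≥ 2. Every deterministic finite automaton over the alphabet Σ = {σ_1,…,σ_{n−1}} whose accepted language is exactly L_n has at least 2^{n−2} states. -/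
/-!
Common setup: the positive braid monoid `B_n^+` on `n` strands, presented by the
Artin generators `σ_1, …, σ_{n-1}` (1-based indexing) with the braid relations;
lex-representatives, forbidden prefixes, admissible functions, etc.
-/

namespace BraidPaper

/-! ### Auxiliary infrastructure for Statement 16 -/

section Infra
open Relation

variable {n : ℕ}

/-- List-level braid rewriting patterns (on letters `Fin (n-1)`, 0-based values). -/
def PatL {m : ℕ} (x y : List (Fin m)) : Prop :=
  (∃ c d : Fin m, ((c : ℕ) + 2 ≤ d ∨ (d : ℕ) + 2 ≤ c) ∧ x = [c, d] ∧ y = [d, c]) ∨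
  (∃ c d : Fin m, (d : ℕ) = c + 1 ∧ ((x = [c, d, c] ∧ y = [d, c, d]) ∨ (x = [d, c, d] ∧ y = [c, d, c])))

/-- One-step rewriting at a position. -/
def StepL {m : ℕ} (l l' : List (Fin m)) : Prop :=
  ∃ a b x y : List (Fin m), PatL x y ∧ l = a ++ x ++ b ∧ l' = a ++ y ++ b

lemma PatL.symm {m : ℕ} {x y : List (Fin m)} (h : PatL x y) : PatL y x := by
  rcases h with ⟨c, d, h1, h2, h3⟩ | ⟨c, d, h1, h2 | h2⟩
  · exact Or.inl ⟨d, c, h1.symm, h3, h2⟩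
  · exact Or.inr ⟨c, d, h1, Or.inr ⟨h2.2, h2.1⟩⟩
  · exact Or.inr ⟨c, d, h1, Or.inl ⟨h2.2, h2.1⟩⟩

lemma StepL.symm {m : ℕ} {l l' : List (Fin m)} (h : StepL l l') : StepL l' l := by
  obtain ⟨a, b, x, y, hp, h1, h2⟩ := h
  exact ⟨a, b, y, x, hp.symm, h2, h1⟩

lemma eqvGen_stepL_append_right {m : ℕ} {l1 l2 : List (Fin m)} (t : List (Fin m))
    (h : EqvGen StepL l1 l2) : EqvGen StepL (l1 ++ t) (l2 ++ t) := by
  induction h with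
  | rel a b hab =>
      obtain ⟨p, q, x, y, hp, rfl, rfl⟩ := hab
      exact EqvGen.rel _ _ ⟨p, q ++ t, x, y, hp, by simp, by simp⟩
  | refl a => exact EqvGen.refl _
  | symm a b _ ih => exact EqvGen.symm _ _ ih
  | trans a b c _ _ ih1 ih2 => exact EqvGen.trans _ _ _ ih1 ih2

lemma eqvGen_stepL_append_left {m : ℕ} {l1 l2 : List (Fin m)} (t : List (Fin m))
    (h : EqvGen StepL l1 l2) : EqvGen StepL (t ++ l1) (t ++ l2) := by
  induction h with
  | rel a b hab =>
      obtain ⟨p, q, x, y, hp, rfl, rfl⟩ := hab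
      exact EqvGen.rel _ _ ⟨t ++ p, q, x, y, hp, by simp, by simp⟩
  | refl a => exact EqvGen.refl _
  | symm a b _ ih => exact EqvGen.symm _ _ ih
  | trans a b c _ _ ih1 ih2 => exact EqvGen.trans _ _ _ ih1 ih2

/-- The congruence on words induced by list-level rewriting. -/
def stepCon (n : ℕ) : Con (Word n) where
  r u v := EqvGen StepL (FreeMonoid.toList u) (FreeMonoid.toList v)
  iseqv := ⟨fun _ => EqvGen.refl _, fun h => EqvGen.symm _ _ h,
    fun h1 h2 => EqvGen.trans _ _ _ h1 h2⟩
  mul' {a b c d} h1 h2 := by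
    simp only [FreeMonoid.toList_mul]
    exact EqvGen.trans _ _ _ (eqvGen_stepL_append_right _ h1) (eqvGen_stepL_append_left _ h2)

lemma sigma_eq {i : ℕ} (h1 : 1 ≤ i) (h2 : i ≤ n - 1) :
    sigma n i = FreeMonoid.of (⟨i - 1, by omega⟩ : Fin (n - 1)) := by
  rw [sigma, dif_pos ⟨h1, h2⟩]

lemma toList_sigma {i : ℕ} (h1 : 1 ≤ i) (h2 : i ≤ n - 1) :
    FreeMonoid.toList (sigma n i) = [(⟨i - 1, by omega⟩ : Fin (n - 1))] := by
  rw [sigma_eq h1 h2, FreeMonoid.toList_of]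

lemma braidCon_le_stepCon : braidCon n ≤ stepCon n := by
  refine Con.conGen_le.mpr fun x y h => ?_
  cases h with
  | comm i j hi hi' hj hj' hij =>
      refine EqvGen.rel _ _ ⟨[], [], [⟨i - 1, by omega⟩, ⟨j - 1, by omega⟩],
        [⟨j - 1, by omega⟩, ⟨i - 1, by omega⟩], ?_, ?_, ?_⟩
      · exact Or.inl ⟨⟨i - 1, by omega⟩, ⟨j - 1, by omega⟩, by simp; omega, rfl, rfl⟩
      · simp [FreeMonoid.toList_mul, toList_sigma hi hi', toList_sigma hj hj']
      · simp [FreeMonoid.toList_mul, toList_sigma hi hi', toList_sigma hj hj']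
  | braid i hi hi' =>
      refine EqvGen.rel _ _ ⟨[], [],
        [⟨i - 1, by omega⟩, ⟨i, by omega⟩, ⟨i - 1, by omega⟩],
        [⟨i, by omega⟩, ⟨i - 1, by omega⟩, ⟨i, by omega⟩], ?_, ?_, ?_⟩
      · exact Or.inr ⟨⟨i - 1, by omega⟩, ⟨i, by omega⟩, by simp; omega, Or.inl ⟨rfl, rfl⟩⟩
      · simp [FreeMonoid.toList_mul, toList_sigma hi (by omega : i ≤ n - 1),
          toList_sigma (by omega : 1 ≤ i + 1) hi', sigma_eq hi (show i ≤ n-1 by omega)]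
      · simp [FreeMonoid.toList_mul, toList_sigma hi (by omega : i ≤ n - 1),
          toList_sigma (by omega : 1 ≤ i + 1) hi', sigma_eq hi (show i ≤ n-1 by omega)]

lemma eqvGen_of_pr_eq {u v : Word n} (h : pr n u = pr n v) :
    EqvGen StepL (FreeMonoid.toList u) (FreeMonoid.toList v) :=
  braidCon_le_stepCon ((Con.eq _).mp h)

lemma pr_step {x y : Word n} (a b : Word n) (h : BraidRel n x y) :
    pr n (a * x * b) = pr n (a * y * b) :=
  (Con.eq _).mpr ((braidCon n).mul ((braidCon n).mul ((braidCon n).refl a)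
    (ConGen.Rel.of x y h)) ((braidCon n).refl b))

lemma class_mem {C : Set (List (Fin (n - 1)))}
    (hC : ∀ l ∈ C, ∀ l', StepL l l' → l' ∈ C) {l0 : List (Fin (n - 1))} (h0 : l0 ∈ C)
    {l : List (Fin (n - 1))} (h : EqvGen StepL l l0) : l ∈ C := by
  have key : ∀ a b : List (Fin (n - 1)), EqvGen StepL a b → (a ∈ C ↔ b ∈ C) := by
    intro a b hab
    induction hab with
    | rel a b hab => exact ⟨fun ha => hC _ ha _ hab, fun hb => hC _ hb _ hab.symm⟩
    | refl a => exact Iff.rfl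
    | symm a b _ ih => exact ih.symm
    | trans a b c _ _ ih1 ih2 => exact ih1.trans ih2
  exact (key _ _ h).mpr h0

/-- "Smoothly descending" lists: each step goes down by 0 or 1. -/
def DescL {m : ℕ} (l : List (Fin m)) : Prop :=
  List.Chain' (fun a b : Fin m => (b : ℕ) ≤ a ∧ (a : ℕ) ≤ b + 1) l

lemma DescL.no_step {m : ℕ} {l : List (Fin m)} (hd : DescL l) {l' : List (Fin m)} :
    ¬ StepL l l' := by
  rintro ⟨a, b, x, y, hp, rfl, -⟩
  have hx : DescL x := by
    have h1 : DescL (x ++ b) := by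
      have := (List.isChain_append.mp (by simpa [List.append_assoc, DescL, List.Chain'] using hd)).2.1
      exact this
    exact (List.isChain_append.mp h1).1
  rcases hp with ⟨c, d, h1, rfl, -⟩ | ⟨c, d, h1, ⟨rfl, -⟩ | ⟨rfl, -⟩⟩
  · rcases List.isChain_cons_cons.mp hx with ⟨⟨h2, h3⟩, -⟩
    omega
  · rcases List.isChain_cons_cons.mp hx with ⟨⟨h2, h3⟩, -⟩
    omega
  · rcases List.isChain_cons_cons.mp hx with ⟨-, h4⟩
    rcases List.isChain_cons_cons.mp h4 with ⟨⟨h2, h3⟩, -⟩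
    omega

lemma not_lex_self {m : ℕ} (l : List (Fin m)) : ¬ List.Lex (· < ·) l l := by
  induction l with
  | nil => intro h; cases h
  | cons a t ih =>
      intro h
      cases h with
      | rel h => exact absurd h (lt_irrefl a)
      | cons h => exact ih h

lemma lex_of_lex_suffix {m : ℕ} (c : List (Fin m)) {l1 l2 : List (Fin m)}
    (h : List.Lex (· < ·) l1 l2) : List.Lex (· < ·) (c ++ l1) (c ++ l2) := by
  induction c with
  | nil => exact h
  | cons a t ih => exact List.Lex.cons ih

lemma lex_cancel_prefix {m : ℕ} (c : List (Fin m)) {l1 l2 : List (Fin m)}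
    (h : List.Lex (· < ·) (c ++ l1) (c ++ l2)) : List.Lex (· < ·) l1 l2 := by
  induction c with
  | nil => exact h
  | cons a t ih =>
      cases h with
      | rel h => exact absurd h (lt_irrefl a)
      | cons h => exact ih h

end Infra


section Blocks
open Relation

variable {n : ℕ}

/-- The word consisting of blocks `i, i-1, …, 2`, where block `k` is
`σ_k σ_{k-1}` if `S k` and `σ_k` otherwise. -/
def blocks (n : ℕ) (S : ℕ → Bool) : ℕ → Word n
  | 0 => 1
  | 1 => 1
  | (i + 2) => (sigma n (i + 2) * (if S (i + 2) then sigma n (i + 1) else 1)) * blocks n S (i + 1)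

/-- The distinguishing word associated to a subset `S ⊆ {2, …, n-1}`. -/
def wWord (n : ℕ) (S : ℕ → Bool) : Word n := blocks n S (n - 1)

lemma mem_toList_sigma {i : ℕ} {c : Fin (n - 1)} (h : c ∈ FreeMonoid.toList (sigma n i)) :
    (c : ℕ) + 1 = i := by
  by_cases hi : 1 ≤ i ∧ i ≤ n - 1
  · rw [toList_sigma hi.1 hi.2] at h
    simp at h
    subst h
    simp
    omega
  · rw [sigma, dif_neg hi] at h
    simp [FreeMonoid.toList_one] at h

lemma blocks_letter_le {S : ℕ → Bool} : ∀ i, ∀ c ∈ FreeMonoid.toList (blocks n S i),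
    (c : ℕ) + 1 ≤ i := by
  intro i
  induction i using Nat.strong_induction_on with
  | _ i ih =>
    match i with
    | 0 => simp [blocks, FreeMonoid.toList_one]
    | 1 => simp [blocks, FreeMonoid.toList_one]
    | (i + 2) =>
      intro c hc
      simp only [blocks, FreeMonoid.toList_mul, List.mem_append] at hc
      rcases hc with (hc | hc) | hc
      · have := mem_toList_sigma hc; omega
      · by_cases hS : S (i + 2)
        · rw [if_pos hS] at hc
          have := mem_toList_sigma hc; omega
        · rw [if_neg hS] at hc
          simp [FreeMonoid.toList_one] at hc
      · have := ih (i + 1) (by omega) c hc; omega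

lemma desc_cons_blocks {S : ℕ → Bool} : ∀ i, i ≤ n - 1 → ∀ c : Fin (n - 1),
    i ≤ (c : ℕ) + 1 → (c : ℕ) + 1 ≤ i + 1 → DescL (c :: FreeMonoid.toList (blocks n S i)) := by
  intro i
  induction i using Nat.strong_induction_on with
  | _ i ih =>
    match i with
    | 0 => intro _ c _ _; simp [blocks, FreeMonoid.toList_one, DescL, List.Chain']
    | 1 => intro _ c _ _; simp [blocks, FreeMonoid.toList_one, DescL, List.Chain']
    | (i + 2) =>
      intro hin c hc1 hc2
      have h2 : (1 : ℕ) ≤ i + 2 := by omega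
      simp only [blocks, FreeMonoid.toList_mul, toList_sigma h2 hin]
      by_cases hS : S (i + 2)
      · rw [if_pos hS, toList_sigma (by omega : 1 ≤ i + 1) (by omega : i + 1 ≤ n - 1)]
        have htail := ih (i + 1) (by omega) (by omega) ⟨i + 1 - 1, by omega⟩
          (by simp) (by simp)
        simp only [List.cons_append, List.nil_append]
        refine List.isChain_cons_cons.mpr ⟨⟨by simp; omega, by simp; omega⟩, ?_⟩
        refine List.isChain_cons_cons.mpr ⟨⟨by simp, by simp⟩, ?_⟩
        exact htail
      · rw [if_neg hS]
        have htail := ih (i + 1) (by omega) (by omega) ⟨i + 2 - 1, by omega⟩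
          (by first | (simp; omega) | simp | omega) (by first | (simp; omega) | simp | omega)
        simp only [FreeMonoid.toList_one, List.cons_append, List.nil_append, List.append_nil]
        refine List.isChain_cons_cons.mpr ⟨⟨by simp; omega, by simp; omega⟩, ?_⟩
        exact htail

lemma desc_blocks {S : ℕ → Bool} (i : ℕ) (hi : i ≤ n - 1) :
    DescL (FreeMonoid.toList (blocks n S i)) := by
  match i with
  | 0 => simp [blocks, FreeMonoid.toList_one, DescL, List.Chain']
  | 1 => simp [blocks, FreeMonoid.toList_one, DescL, List.Chain']
  | (i + 2) =>
    have := desc_cons_blocks (n := n) (S := S) (i + 2) hi ⟨i + 2 - 1, by omega⟩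
      (by first | (simp; omega) | simp | omega) (by first | (simp; omega) | simp | omega)
    exact this.tail

lemma desc_wWord {S : ℕ → Bool} : DescL (FreeMonoid.toList (wWord n S)) :=
  desc_blocks _ le_rfl

lemma blocks_split {S : ℕ → Bool} (j : ℕ) (hj : 2 ≤ j) :
    ∀ k, j ≤ k → ∃ P : Word n, blocks n S k = P * blocks n S j := by
  intro k
  induction k with
  | zero => intro h; exact ⟨1, by omega⟩
  | succ k ihk =>
    intro h
    rcases Nat.lt_or_ge k j with hk | hk
    · have : j = k + 1 := by omega
      subst this
      exact ⟨1, (one_mul _).symm⟩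
    · obtain ⟨P, hP⟩ := ihk hk
      obtain ⟨k', rfl⟩ : ∃ k', k = k' + 1 := ⟨k - 1, by omega⟩
      refine ⟨(sigma n (k' + 2) * (if S (k' + 2) then sigma n (k' + 1) else 1)) * P, ?_⟩
      show blocks n S (k' + 1 + 1) = _
      have : k' + 1 + 1 = k' + 2 := rfl
      rw [this, blocks, hP]
      simp [mul_assoc]

lemma blocks_two {S : ℕ → Bool} :
    blocks n S 2 = sigma n 2 * (if S 2 then sigma n 1 else 1) := by
  show (sigma n 2 * (if S 2 then sigma n 1 else 1)) * blocks n S 1 = _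
  rw [blocks, mul_one]

lemma blocks_eq_of_ge_two {S : ℕ → Bool} {j : ℕ} (hj : 2 ≤ j) :
    blocks n S j = (sigma n j * (if S j then sigma n (j - 1) else 1)) * blocks n S (j - 1) := by
  obtain ⟨i, rfl⟩ : ∃ i, j = i + 2 := ⟨j - 2, by omega⟩
  show blocks n S (i + 2) = _
  rw [blocks]
  congr 2 <;> simp

/-- Commuting a high letter past a word of low letters. -/
lemma comm_below {j : ℕ} (hj1 : 1 ≤ j) (hj2 : j ≤ n - 1) :
    ∀ l : List (Fin (n - 1)), (∀ c ∈ l, (c : ℕ) + 3 ≤ j) →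
      pr n (FreeMonoid.ofList l * sigma n j) = pr n (sigma n j * FreeMonoid.ofList l) := by
  intro l
  induction l with
  | nil => simp [FreeMonoid.ofList_nil]
  | cons c t ih =>
    intro hb
    have hc : (c : ℕ) + 3 ≤ j := hb c (by simp)
    have hcn : (c : ℕ) + 1 ≤ n - 1 := by have := c.isLt; omega
    have hofc : FreeMonoid.ofList (c :: t) = FreeMonoid.of c * FreeMonoid.ofList t := rfl
    have hsc : FreeMonoid.of c = sigma n ((c : ℕ) + 1) := by
      rw [sigma_eq (by omega) hcn]
      exact congrArg FreeMonoid.of (Fin.ext (by simp)).symm |>.symm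
    have hcomm : pr n (FreeMonoid.of c) * pr n (sigma n j)
        = pr n (sigma n j) * pr n (FreeMonoid.of c) := by
      have := pr_step (n := n) 1 1 (BraidRel.comm ((c : ℕ) + 1) j (by omega) hcn
        hj1 hj2 (by omega))
      rw [hsc]
      simpa [map_mul] using this
    have ih' : pr n (FreeMonoid.ofList t) * pr n (sigma n j)
        = pr n (sigma n j) * pr n (FreeMonoid.ofList t) := by
      have := ih (fun c hc => hb c (by simp [hc]))
      simpa [map_mul] using this
    rw [hofc]
    simp only [map_mul]
    rw [mul_assoc, ih', ← mul_assoc, hcomm, mul_assoc]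

end Blocks


section Closure
open Relation

variable {n : ℕ}

/-- The candidate equivalence class: the big letter `J` inserted anywhere in `rl`. -/
def Cset (q rl : List (Fin (n - 1))) (J J' : Fin (n - 1)) : Set (List (Fin (n - 1))) :=
  {l | ∃ u v, rl = u ++ v ∧ l = q ++ J :: J' :: J' :: (u ++ J :: v)}

lemma last1 {q u a : List (Fin (n - 1))} {J J' c : Fin (n - 1)}
    (h : q ++ J :: J' :: J' :: u = a ++ [c]) : c = J' ∨ c ∈ u := by
  rcases List.eq_nil_or_concat u with rfl | ⟨u1, e, rfl⟩
  · left
    have h' : (q ++ [J, J']) ++ [J'] = a ++ [c] := by simpa using h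
    have := (List.append_inj' h' rfl).2
    simpa using this.symm
  · right
    have h' : (q ++ J :: J' :: J' :: u1) ++ [e] = a ++ [c] := by simpa using h
    have := (List.append_inj' h' rfl).2
    simp at this
    simp [this]

lemma last2 {q u a : List (Fin (n - 1))} {J J' c0 c1 : Fin (n - 1)}
    (h : q ++ J :: J' :: J' :: u = a ++ [c0, c1]) : c0 = J' ∨ c0 ∈ u := by
  rcases List.eq_nil_or_concat u with rfl | ⟨u1, e, rfl⟩
  · left
    have h' : (q ++ [J]) ++ [J', J'] = a ++ [c0, c1] := by simpa using h
    have := (List.append_inj' h' rfl).2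
    simp at this
    exact this.1.symm
  · have h' : (q ++ J :: J' :: J' :: u1) ++ [e] = (a ++ [c0]) ++ [c1] := by simpa using h
    have h2 := (List.append_inj' h' rfl).1
    rcases last1 h2 with h3 | h3
    · exact Or.inl h3
    · right; simp [h3]

lemma closedC {q rl : List (Fin (n - 1))} {J J' : Fin (n - 1)}
    (hJ' : (J' : ℕ) + 1 = J)
    (hr : ∀ c ∈ rl, (c : ℕ) + 2 ≤ J)
    (hB : DescL (q ++ J :: J' :: J' :: rl)) :
    ∀ l ∈ Cset q rl J J', ∀ l', StepL l l' → l' ∈ Cset q rl J J' := by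
  rintro l ⟨u, v, huv, rfl⟩ l' ⟨a, b, x, y, hp, heq, rfl⟩
  set P : List (Fin (n - 1)) := q ++ J :: J' :: J' :: u with hPdef
  have hBPv : DescL (P ++ v) := by
    simpa [hPdef, huv, List.append_assoc] using hB
  have hPdesc : DescL P := (List.isChain_append.mp hBPv).1
  have hvdesc : DescL v := (List.isChain_append.mp hBPv).2.1
  have heq' : P ++ (J :: v) = a ++ (x ++ b) := by
    simpa [hPdef, List.append_assoc] using heq
  rcases List.append_eq_append_iff.mp heq' with ⟨t, hat, hvt⟩ | ⟨t, hPt, hxt⟩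
  · -- a = P ++ t, J :: v = t ++ (x ++ b)
    cases t with
    | cons t0 t' =>
      have hvt' : J :: v = t0 :: (t' ++ (x ++ b)) := by simpa using hvt
      obtain ⟨h1, h2⟩ := List.cons_eq_cons.mp hvt'
      exact (hvdesc.no_step (l' := t' ++ y ++ b)
        ⟨t', b, x, y, hp, by simp [h2, List.append_assoc], rfl⟩).elim
    | nil =>
      have ha : a = P := by simpa using hat
      have hvt0 : J :: v = x ++ b := by simpa using hvt
      rcases hp with ⟨c, d, hcd, rfl, rfl⟩ | ⟨c, d, hd, ⟨rfl, rfl⟩ | ⟨rfl, rfl⟩⟩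
      · -- x = [c, d]
        have hvt' : J :: v = c :: (d :: b) := by simpa using hvt0
        obtain ⟨h1, h2⟩ := List.cons_eq_cons.mp hvt'
        subst h2
        refine ⟨u ++ [d], b, by simp [huv], ?_⟩
        simp [ha, hPdef, ← h1, List.append_assoc]
      · -- x = [c, d, c] : first letter J = c, but also c ∈ v ⊆ rl, impossible
        have hvt' : J :: v = c :: (d :: c :: b) := by simpa using hvt0
        obtain ⟨h1, h2⟩ := List.cons_eq_cons.mp hvt'
        subst h2
        have hm : J ∈ rl := by rw [huv]; simp [← h1]
        have := hr _ hm; omega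
      · -- x = [d, c, d]
        have hvt' : J :: v = d :: (c :: d :: b) := by simpa using hvt0
        obtain ⟨h1, h2⟩ := List.cons_eq_cons.mp hvt'
        subst h2
        have hm : J ∈ rl := by rw [huv]; simp [← h1]
        have := hr _ hm; omega
  · -- P = a ++ t, x ++ b = t ++ (J :: v)
    rcases List.append_eq_append_iff.mp hxt with ⟨s, hts, hbs⟩ | ⟨s, hxs, hsv⟩
    · exact (hPdesc.no_step (l' := a ++ y ++ s)
        ⟨a, s, x, y, hp, by rw [hPt, hts, List.append_assoc], rfl⟩).elim
    · -- x = t ++ s, J :: v = s ++ b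
      cases s with
      | nil =>
        have hxteq : x = t := by simpa using hxs
        exact (hPdesc.no_step (l' := a ++ y)
          ⟨a, [], x, y, hp, by simp [hPt, hxteq], by simp⟩).elim
      | cons s0 s' =>
        have hsv' : J :: v = s0 :: (s' ++ b) := by simpa using hsv
        obtain ⟨h1, h2⟩ := List.cons_eq_cons.mp hsv'
        subst h2
        rcases hp with ⟨c, d, hcd, rfl, rfl⟩ | ⟨c, d, hd, ⟨rfl, rfl⟩ | ⟨rfl, rfl⟩⟩
        · -- x = [c, d] = t ++ s0 :: s'
          cases t with
          | nil =>
            have hx' : c :: [d] = s0 :: s' := by simpa using hxs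
            obtain ⟨hc, hs'⟩ := List.cons_eq_cons.mp hx'
            refine ⟨u ++ [d], b, ?_, ?_⟩
            · simp [huv, ← hs']
            · have ha : P = a := by simpa using hPt
              simp [← ha, hPdef, hc, ← h1, List.append_assoc]
          | cons t0 t' =>
            cases t' with
            | cons t1 t'' =>
              exact absurd (congrArg List.length hxs)
                (by intro hlen; simp at hlen; try omega)
            | nil =>
              have hx' : c :: [d] = t0 :: (s0 :: s') := by simpa using hxs
              obtain ⟨hc, h2⟩ := List.cons_eq_cons.mp hx'
              obtain ⟨hdJ, hs'⟩ := List.cons_eq_cons.mp h2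
              have hs'' : s' = [] := hs'.symm
              subst hs''
              have hPa : q ++ J :: J' :: J' :: u = a ++ [c] := by
                simpa [hPdef, ← hc] using hPt
              rcases List.eq_nil_or_concat u with rfl | ⟨u1, e, rfl⟩
              · -- c = J' : contradicts the commutation distance
                have h' : (q ++ [J, J']) ++ [J'] = a ++ [c] := by simpa using hPa
                obtain ⟨-, h3⟩ := List.append_inj' h' rfl
                have hcJ' : J' = c := by simpa using h3
                have h4 : (J' : ℕ) = c := by rw [hcJ']
                have h5 : (d : ℕ) = J := by rw [hdJ, h1]
                omega
              · have h' : (q ++ J :: J' :: J' :: u1) ++ [e] = a ++ [c] := by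
                  simpa using hPa
                obtain ⟨h2a, h3⟩ := List.append_inj' h' rfl
                have he : e = c := by simpa using h3
                refine ⟨u1, c :: b, ?_, ?_⟩
                · simp [huv, ← he]
                · simp [← h2a, hdJ, ← h1, List.append_assoc]
        · -- x = [c, d, c], y = [d, c, d], with d = c + 1
          cases t with
          | nil =>
            have hx' : c :: [d, c] = s0 :: s' := by simpa using hxs
            obtain ⟨hc, hs'⟩ := List.cons_eq_cons.mp hx'
            have hcv : (c : ℕ) = J := by rw [hc, ← h1]
            have hm : c ∈ rl := by rw [huv]; simp [← hs']
            have := hr _ hm; omega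
          | cons t0 t' =>
            cases t' with
            | nil =>
              have hx' : c :: [d, c] = t0 :: (s0 :: s') := by simpa using hxs
              obtain ⟨hc, h2⟩ := List.cons_eq_cons.mp hx'
              obtain ⟨hdJ, hs'⟩ := List.cons_eq_cons.mp h2
              have hdv : (d : ℕ) = J := by rw [hdJ, ← h1]
              have hm : c ∈ rl := by rw [huv]; simp [← hs']
              have := hr _ hm; omega
            | cons t1 t'' =>
              cases t'' with
              | cons _ _ =>
                exact absurd (congrArg List.length hxs)
                  (by intro hlen; simp at hlen; try omega)
              | nil =>
                have hx' : c :: [d, c] = t0 :: (t1 :: (s0 :: s')) := by simpa using hxs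
                obtain ⟨hc0, h2⟩ := List.cons_eq_cons.mp hx'
                obtain ⟨hd1, h3⟩ := List.cons_eq_cons.mp h2
                obtain ⟨hcJ, hs'⟩ := List.cons_eq_cons.mp h3
                have hcv : (c : ℕ) = J := by rw [hcJ, ← h1]
                have hPa : q ++ J :: J' :: J' :: u = a ++ [c, d] := by
                  simpa [hPdef, ← hc0, ← hd1] using hPt
                rcases last2 hPa with h4 | h4
                · have : (J' : ℕ) = c := by rw [h4]
                  omega
                · have hm : c ∈ rl := by rw [huv]; simp [h4]
                  have := hr _ hm; omega
        · -- x = [d, c, d], y = [c, d, c], with d = c + 1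
          cases t with
          | nil =>
            have hx' : d :: [c, d] = s0 :: s' := by simpa using hxs
            obtain ⟨hdJ, hs'⟩ := List.cons_eq_cons.mp hx'
            have hdv : (d : ℕ) = J := by rw [hdJ, ← h1]
            have hm : d ∈ rl := by rw [huv]; simp [← hs']
            have := hr _ hm; omega
          | cons t0 t' =>
            cases t' with
            | nil =>
              have hx' : d :: [c, d] = t0 :: (s0 :: s') := by simpa using hxs
              obtain ⟨hd0, h2⟩ := List.cons_eq_cons.mp hx'
              obtain ⟨hcJ, hs'⟩ := List.cons_eq_cons.mp h2
              have hcv : (c : ℕ) = J := by rw [hcJ, ← h1]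
              have hm : d ∈ rl := by rw [huv]; simp [← hs']
              have := hr _ hm; omega
            | cons t1 t'' =>
              cases t'' with
              | cons _ _ =>
                exact absurd (congrArg List.length hxs)
                  (by intro hlen; simp at hlen; try omega)
              | nil =>
                have hx' : d :: [c, d] = t0 :: (t1 :: (s0 :: s')) := by simpa using hxs
                obtain ⟨hd0, h2⟩ := List.cons_eq_cons.mp hx'
                obtain ⟨hc1, h3⟩ := List.cons_eq_cons.mp h2
                obtain ⟨hdJ, hs'⟩ := List.cons_eq_cons.mp h3
                have hdv : (d : ℕ) = J := by rw [hdJ, ← h1]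
                have hPa : q ++ J :: J' :: J' :: u = a ++ [d, c] := by
                  simpa [hPdef, ← hd0, ← hc1] using hPt
                rcases last2 hPa with h4 | h4
                · have : (J' : ℕ) = d := by rw [h4]
                  omega
                · have hm : d ∈ rl := by rw [huv]; simp [h4]
                  have := hr _ hm; omega

end Closure



section MinMem
open Relation

variable {n : ℕ}

lemma minC {q rl : List (Fin (n - 1))} {J J' : Fin (n - 1)}
    (hr : ∀ c ∈ rl, (c : ℕ) + 2 ≤ J) :
    ∀ l ∈ Cset q rl J J', ¬ List.Lex (· < ·) l (q ++ J :: J' :: J' :: (rl ++ [J])) := by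
  rintro l ⟨u, v, huv, rfl⟩ hlex
  rw [huv] at hlex
  have hlex2 : List.Lex (· < ·) (J :: v) (v ++ [J]) := by
    have h1 : List.Lex (· < ·) ((q ++ [J, J', J'] ++ u) ++ (J :: v))
        ((q ++ [J, J', J'] ++ u) ++ (v ++ [J])) := by
      simpa [List.append_assoc] using hlex
    exact lex_cancel_prefix _ h1
  cases v with
  | nil => exact not_lex_self _ hlex2
  | cons e v' =>
    have he : (e : ℕ) + 2 ≤ J := hr e (by rw [huv]; simp)
    cases hlex2 with
    | rel h => rw [Fin.lt_def] at h; omega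
    | cons h =>
      -- heads were equal : e = J, impossible
      omega

lemma mem_Ln_of_min {w : Word n} (C : Set (List (Fin (n - 1))))
    (hclosed : ∀ l ∈ C, ∀ l', StepL l l' → l' ∈ C)
    (hw : FreeMonoid.toList w ∈ C)
    (hmin : ∀ l ∈ C, ¬ List.Lex (· < ·) l (FreeMonoid.toList w)) : w ∈ Ln n := by
  intro v hv
  exact hmin _ (class_mem hclosed hw (eqvGen_of_pr_eq hv))

lemma not_mem_Ln {w v : Word n} (h : pr n v = pr n w) (hlex : lexLt v w) : w ∉ Ln n :=
  fun hw => hw v h hlex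

end MinMem


section Keys
open Relation

variable {n : ℕ}

lemma key_mem {S : ℕ → Bool} {j : ℕ} (h3 : 3 ≤ j) (hj : j ≤ n - 1) (hS : S j = true) :
    wWord n S * sigma n j ∈ Ln n := by
  obtain ⟨P, hP⟩ := blocks_split (n := n) j (by omega) (n - 1) hj
  have e1 : blocks n S j = sigma n j * (sigma n (j - 1) * blocks n S (j - 1)) := by
    rw [blocks_eq_of_ge_two (by omega : 2 ≤ j), hS]
    simp [mul_assoc]
  have e2 : blocks n S (j - 1) =
      sigma n (j - 1) * ((if S (j - 1) = true then sigma n (j - 2) else 1) * blocks n S (j - 2)) := by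
    rw [blocks_eq_of_ge_two (by omega : 2 ≤ j - 1)]
    have e : j - 1 - 1 = j - 2 := by omega
    rw [e, mul_assoc]
  set r : Word n := (if S (j - 1) = true then sigma n (j - 2) else 1) * blocks n S (j - 2)
    with hrdef
  set J : Fin (n - 1) := ⟨j - 1, by omega⟩ with hJdef
  set J' : Fin (n - 1) := ⟨j - 2, by omega⟩ with hJ'def
  have htos : FreeMonoid.toList (sigma n j) = [J] := toList_sigma (by omega) hj
  have htos' : FreeMonoid.toList (sigma n (j - 1)) = [J'] := by
    rw [toList_sigma (by omega) (by omega)]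
    have e : j - 1 - 1 = j - 2 := by omega
    simp only [hJ'def, e]
  have htw0 : FreeMonoid.toList (wWord n S)
      = FreeMonoid.toList P ++ J :: J' :: J' :: FreeMonoid.toList r := by
    rw [wWord, hP, e1, e2]
    simp [FreeMonoid.toList_mul, htos, htos']
  have htw : FreeMonoid.toList (wWord n S * sigma n j)
      = FreeMonoid.toList P ++ J :: J' :: J' :: (FreeMonoid.toList r ++ [J]) := by
    rw [FreeMonoid.toList_mul, htw0, htos]
    simp [List.append_assoc]
  have hrl : ∀ c ∈ FreeMonoid.toList r, (c : ℕ) + 2 ≤ J := by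
    intro c hc
    rw [hrdef, FreeMonoid.toList_mul, List.mem_append] at hc
    rcases hc with hc | hc
    · by_cases hS' : S (j - 1) = true
      · rw [if_pos hS'] at hc
        have := mem_toList_sigma hc
        simp [hJdef]
        omega
      · rw [if_neg hS'] at hc
        simp [FreeMonoid.toList_one] at hc
    · have := blocks_letter_le (S := S) (j - 2) c hc
      simp [hJdef]
      omega
  have hJJ' : (J' : ℕ) + 1 = J := by simp [hJdef, hJ'def]; omega
  have hB : DescL (FreeMonoid.toList P ++ J :: J' :: J' :: FreeMonoid.toList r) := by
    rw [← htw0]; exact desc_wWord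
  refine mem_Ln_of_min (Cset (FreeMonoid.toList P) (FreeMonoid.toList r) J J')
    (closedC hJJ' hrl hB) ?_ ?_
  · exact ⟨FreeMonoid.toList r, [], by simp, by rw [htw]⟩
  · intro l hl
    rw [htw]
    exact minC hrl l hl

lemma key_not_mem {S : ℕ → Bool} {j : ℕ} (h3 : 3 ≤ j) (hj : j ≤ n - 1) (hS : S j = false) :
    wWord n S * sigma n j ∉ Ln n := by
  obtain ⟨P, hP⟩ := blocks_split (n := n) j (by omega) (n - 1) hj
  have e1 : blocks n S j = sigma n j * blocks n S (j - 1) := by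
    rw [blocks_eq_of_ge_two (by omega : 2 ≤ j), hS]
    simp
  have e2 : blocks n S (j - 1) =
      sigma n (j - 1) * ((if S (j - 1) = true then sigma n (j - 2) else 1) * blocks n S (j - 2)) := by
    rw [blocks_eq_of_ge_two (by omega : 2 ≤ j - 1)]
    have e : j - 1 - 1 = j - 2 := by omega
    rw [e, mul_assoc]
  set r : Word n := (if S (j - 1) = true then sigma n (j - 2) else 1) * blocks n S (j - 2)
    with hrdef
  set J : Fin (n - 1) := ⟨j - 1, by omega⟩ with hJdef
  set J' : Fin (n - 1) := ⟨j - 2, by omega⟩ with hJ'def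
  have htos : FreeMonoid.toList (sigma n j) = [J] := toList_sigma (by omega) hj
  have htos' : FreeMonoid.toList (sigma n (j - 1)) = [J'] := by
    rw [toList_sigma (by omega) (by omega)]
    have e : j - 1 - 1 = j - 2 := by omega
    simp only [hJ'def, e]
  have hrl : ∀ c ∈ FreeMonoid.toList r, (c : ℕ) + 3 ≤ j := by
    intro c hc
    rw [hrdef, FreeMonoid.toList_mul, List.mem_append] at hc
    rcases hc with hc | hc
    · by_cases hS' : S (j - 1) = true
      · rw [if_pos hS'] at hc
        have := mem_toList_sigma hc
        omega
      · rw [if_neg hS'] at hc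
        simp [FreeMonoid.toList_one] at hc
    · have := blocks_letter_le (S := S) (j - 2) c hc
      omega
  -- the lexicographically smaller equivalent word
  set v : Word n := P * (sigma n (j - 1) * (sigma n j * (sigma n (j - 1) * r))) with hvdef
  have hc1 : pr n r * pr n (sigma n j) = pr n (sigma n j) * pr n r := by
    have := comm_below (n := n) (by omega : 1 ≤ j) hj (FreeMonoid.toList r) hrl
    simpa [FreeMonoid.ofList_toList, map_mul] using this
  have ej : j - 1 + 1 = j := by omega
  have hbr := pr_step (n := n) P r (BraidRel.braid (j - 1) (by omega) (by omega))
  rw [ej] at hbr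
  have hbr' : pr n P * (pr n (sigma n (j - 1)) * (pr n (sigma n j) * (pr n (sigma n (j - 1)) * pr n r)))
      = pr n P * (pr n (sigma n j) * (pr n (sigma n (j - 1)) * (pr n (sigma n j) * pr n r))) := by
    simpa [map_mul, mul_assoc] using hbr
  have h1 : pr n (wWord n S * sigma n j)
      = pr n P * (pr n (sigma n j) * (pr n (sigma n (j - 1)) * (pr n r * pr n (sigma n j)))) := by
    rw [wWord, hP, e1, e2]
    simp [map_mul, mul_assoc]
  have h2 : pr n v = pr n P * (pr n (sigma n (j - 1)) * (pr n (sigma n j) * (pr n (sigma n (j - 1)) * pr n r))) := by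
    rw [hvdef]
    simp [map_mul, mul_assoc]
  have hpr : pr n v = pr n (wWord n S * sigma n j) := by
    rw [h1, hc1, h2, hbr']
  refine not_mem_Ln hpr ?_
  show List.Lex (· < ·) (FreeMonoid.toList v) (FreeMonoid.toList (wWord n S * sigma n j))
  have htv : FreeMonoid.toList v
      = FreeMonoid.toList P ++ (J' :: J :: J' :: FreeMonoid.toList r) := by
    rw [hvdef]
    simp [FreeMonoid.toList_mul, htos, htos']
  have htw : FreeMonoid.toList (wWord n S * sigma n j)
      = FreeMonoid.toList P ++ (J :: J' :: (FreeMonoid.toList r ++ [J])) := by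
    rw [FreeMonoid.toList_mul, wWord, hP, e1, e2]
    simp [FreeMonoid.toList_mul, htos, htos', List.append_assoc]
  rw [htv, htw]
  refine lex_of_lex_suffix _ ?_
  exact List.Lex.rel (by rw [Fin.lt_def]; simp [hJdef, hJ'def]; omega)

lemma key2_mem {S : ℕ → Bool} (hn3 : 2 ≤ n - 1) (hS : S 2 = false) :
    wWord n S * sigma n 2 ∈ Ln n := by
  obtain ⟨P, hP⟩ := blocks_split (n := n) 2 le_rfl (n - 1) hn3
  have e1 : blocks n S 2 = sigma n 2 := by
    rw [blocks_two, hS]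
    simp
  set c1 : Fin (n - 1) := ⟨1, by omega⟩ with hc1def
  have htos : FreeMonoid.toList (sigma n 2) = [c1] := toList_sigma (by omega) hn3
  have htw0 : FreeMonoid.toList (wWord n S) = FreeMonoid.toList P ++ [c1] := by
    rw [wWord, hP, e1, FreeMonoid.toList_mul, htos]
  have htw : FreeMonoid.toList (wWord n S * sigma n 2)
      = (FreeMonoid.toList P ++ [c1]) ++ [c1] := by
    rw [FreeMonoid.toList_mul, htw0, htos]
  have hD : DescL (FreeMonoid.toList (wWord n S * sigma n 2)) := by
    rw [htw]
    refine List.isChain_append.mpr ⟨by rw [← htw0]; exact desc_wWord, by simp [DescL, List.Chain'], ?_⟩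
    intro x hx y hy
    rw [List.getLast?_concat] at hx
    simp at hx hy
    subst hx; subst hy
    exact ⟨le_rfl, by omega⟩
  refine mem_Ln_of_min {FreeMonoid.toList (wWord n S * sigma n 2)} ?_ rfl ?_
  · rintro l rfl l' hstep
    exact (hD.no_step hstep).elim
  · rintro l rfl
    exact not_lex_self _

lemma key2_not_mem {S : ℕ → Bool} (hn3 : 2 ≤ n - 1) (hS : S 2 = true) :
    wWord n S * sigma n 2 ∉ Ln n := by
  obtain ⟨P, hP⟩ := blocks_split (n := n) 2 le_rfl (n - 1) hn3
  have e1 : blocks n S 2 = sigma n 2 * sigma n 1 := by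
    rw [blocks_two, hS]
    simp
  set c0 : Fin (n - 1) := ⟨0, by omega⟩ with hc0def
  set c1 : Fin (n - 1) := ⟨1, by omega⟩ with hc1def
  have htos1 : FreeMonoid.toList (sigma n 1) = [c0] := toList_sigma le_rfl (by omega)
  have htos2 : FreeMonoid.toList (sigma n 2) = [c1] := toList_sigma (by omega) hn3
  set v : Word n := P * (sigma n 1 * (sigma n 2 * sigma n 1)) with hvdef
  have hbr := pr_step (n := n) P 1 (BraidRel.braid 1 le_rfl (by omega))
  have hbr' : pr n P * (pr n (sigma n 1) * (pr n (sigma n 2) * pr n (sigma n 1)))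
      = pr n P * (pr n (sigma n 2) * (pr n (sigma n 1) * pr n (sigma n 2))) := by
    simpa [map_mul, mul_assoc] using hbr
  have hpr : pr n v = pr n (wWord n S * sigma n 2) := by
    rw [hvdef, wWord, hP, e1]
    simp only [map_mul, mul_assoc]
    exact hbr'
  refine not_mem_Ln hpr ?_
  show List.Lex (· < ·) (FreeMonoid.toList v) (FreeMonoid.toList (wWord n S * sigma n 2))
  have htv : FreeMonoid.toList v = FreeMonoid.toList P ++ (c0 :: c1 :: [c0]) := by
    rw [hvdef]
    simp [FreeMonoid.toList_mul, htos1, htos2]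
  have htw : FreeMonoid.toList (wWord n S * sigma n 2)
      = FreeMonoid.toList P ++ (c1 :: c0 :: [c1]) := by
    rw [FreeMonoid.toList_mul, wWord, hP, e1]
    simp [FreeMonoid.toList_mul, htos1, htos2]
  rw [htv, htw]
  refine lex_of_lex_suffix _ ?_
  exact List.Lex.rel (by rw [Fin.lt_def]; simp [hc0def, hc1def])

end Keys

/-- every DFA accepting exactly `L_n` has at least `2^(n-2)` states. -/
theorem statement_16 (n : ℕ) (hn : 2 ≤ n) (Q : Type) (hQ : Finite Q)
    (M : DFA (Fin (n - 1)) Q)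
    (hM : ∀ u : List (Fin (n - 1)), u ∈ M.accepts ↔ FreeMonoid.ofList u ∈ Ln n) :
    2 ^ (n - 2) ≤ Nat.card Q := by
  classical
  -- encode subsets of {2, …, n-1} as functions Fin (n-2) → Bool
  let Sg : (Fin (n - 2) → Bool) → ℕ → Bool := fun g i =>
    if h : 2 ≤ i ∧ i ≤ n - 1 then g ⟨i - 2, by omega⟩ else false
  let f : (Fin (n - 2) → Bool) → Q := fun g => M.eval (FreeMonoid.toList (wWord n (Sg g)))
  have keyeval : ∀ l1 l2 : List (Fin (n - 1)),
      M.eval (l1 ++ l2) = M.evalFrom (M.eval l1) l2 := fun l1 l2 =>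
    M.evalFrom_of_append M.start l1 l2
  have hacc : ∀ (S : ℕ → Bool) (j : ℕ), 1 ≤ j → j ≤ n - 1 →
      ((FreeMonoid.toList (wWord n S) ++ FreeMonoid.toList (sigma n j)) ∈ M.accepts
        ↔ wWord n S * sigma n j ∈ Ln n) := by
    intro S j h1 h2
    rw [hM]
    have : FreeMonoid.ofList (FreeMonoid.toList (wWord n S) ++ FreeMonoid.toList (sigma n j))
        = wWord n S * sigma n j := by
      rw [← FreeMonoid.toList_mul, FreeMonoid.ofList_toList]
    rw [this]
  have hinj : Function.Injective f := by
    intro g g' hf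
    by_contra hne
    obtain ⟨i, hi⟩ : ∃ i, g i ≠ g' i := Function.ne_iff.mp hne
    set j := (i : ℕ) + 2 with hjdef
    have hj2 : 2 ≤ j := by omega
    have hjn : j ≤ n - 1 := by have := i.isLt; omega
    have hfix : (⟨j - 2, by omega⟩ : Fin (n - 2)) = i := by
      ext
      simp [hjdef]
    have hSg : Sg g j = g i := by
      simp only [Sg, dif_pos (⟨hj2, hjn⟩ : 2 ≤ j ∧ j ≤ n - 1)]
      rw [hfix]
    have hSg' : Sg g' j = g' i := by
      simp only [Sg, dif_pos (⟨hj2, hjn⟩ : 2 ≤ j ∧ j ≤ n - 1)]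
      rw [hfix]
    have hSgneq : Sg g j ≠ Sg g' j := by rw [hSg, hSg']; exact hi
    have hmem : (wWord n (Sg g) * sigma n j ∈ Ln n) ↔ (wWord n (Sg g') * sigma n j ∈ Ln n) := by
      rw [← hacc _ _ (by omega) hjn, ← hacc _ _ (by omega) hjn,
        DFA.mem_accepts, DFA.mem_accepts, keyeval, keyeval]
      show M.evalFrom (f g) _ ∈ M.accept ↔ M.evalFrom (f g') _ ∈ M.accept
      rw [hf]
    by_cases hj2' : j = 2
    · rw [hj2'] at hSgneq hmem
      cases hb : Sg g 2 <;> cases hb' : Sg g' 2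
      · exact hSgneq (hb.trans hb'.symm)
      · exact key2_not_mem (by omega) hb' (hmem.mp (key2_mem (by omega) hb))
      · exact key2_not_mem (by omega) hb (hmem.mpr (key2_mem (by omega) hb'))
      · exact hSgneq (hb.trans hb'.symm)
    · have hj3 : 3 ≤ j := by omega
      cases hb : Sg g j <;> cases hb' : Sg g' j
      · exact hSgneq (hb.trans hb'.symm)
      · exact key_not_mem hj3 hjn hb (hmem.mpr (key_mem hj3 hjn hb'))
      · exact key_not_mem hj3 hjn hb' (hmem.mp (key_mem hj3 hjn hb))
      · exact hSgneq (hb.trans hb'.symm)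
  calc 2 ^ (n - 2) = Nat.card (Fin (n - 2) → Bool) := by
        simp [Nat.card_eq_fintype_card, Fintype.card_fun]
    _ ≤ Nat.card Q := Nat.card_le_card_of_injective f hinj

end BraidPaper
end
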